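/- arXiv:1807.03271 — 9 statements merged into one kernel-verified Lean document; each statement's English description precedes it below -/
import Mathlib

section
/- The number of m-Dyck paths from (0,0) to ((m+1)n, 0) equals the Fuss–Catalan number C_n^{(m+1)} = (1/(mn+1))·binom((m+1)n, n). -/
/-- An `m`-Dyck path, encoded as its list of steps: each step is `1` (rise) or
`-m` (`m`-fall), all partial sums are nonnegative, and the total sum is `0`. -/
def IsMDyckPath (m : ℕ) (l : List ℤ) : Prop :=
  (∀ s ∈ l, s = 1 ∨ s = -(m : ℤ)) ∧ (∀ k : ℕ, 0 ≤ (l.take k).sum) ∧ l.sum = 0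

namespace MDyckAux

/-- Entries are rises or `m`-falls. -/
def Steps (m : ℕ) (l : List ℤ) : Prop := ∀ s ∈ l, s = 1 ∨ s = -(m : ℤ)

/-- Periodic extension of a list. -/
def W (l : List ℤ) (i : ℕ) : ℤ := l.getD (i % l.length) 0

/-- Partial sums of the periodic extension. -/
def P (l : List ℤ) (k : ℕ) : ℤ := ∑ i ∈ Finset.range k, W l i

/-- All proper nonempty partial sums are positive. -/
def Good (l : List ℤ) : Prop := ∀ k, 1 ≤ k → k ≤ l.length → 0 < (l.take k).sum

lemma P_zero (l : List ℤ) : P l 0 = 0 := by simp [P]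

lemma P_succ (l : List ℤ) (k : ℕ) : P l (k + 1) = P l k + W l k := by
  simp [P, Finset.sum_range_succ]

lemma P_eq_take (l : List ℤ) : ∀ k, k ≤ l.length → P l k = (l.take k).sum := by
  intro k
  induction k with
  | zero => simp [P_zero]
  | succ k ih =>
    intro hk
    have hk' : k < l.length := hk
    rw [P_succ, ih (le_of_lt hk'), List.sum_take_succ _ _ hk']
    congr 1
    show l.getD (k % l.length) 0 = l[k]
    rw [Nat.mod_eq_of_lt hk']
    exact List.getD_eq_getElem _ _ hk' 

lemma P_length (l : List ℤ) : P l l.length = l.sum := by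
  rw [P_eq_take l l.length le_rfl, List.take_length]

lemma W_add_length (l : List ℤ) (k : ℕ) : W l (k + l.length) = W l k := by
  simp [W, Nat.add_mod_right]

lemma P_add_length (l : List ℤ) (k : ℕ) : P l (k + l.length) = P l k + l.sum := by
  induction k with
  | zero => simpa [P_zero] using P_length l
  | succ k ih =>
    have : k + 1 + l.length = (k + l.length) + 1 := by omega
    rw [this, P_succ, ih, W_add_length, P_succ]
    ring

lemma sum_range_W (l : List ℤ) (a : ℕ) : ∀ k,
    ∑ i ∈ Finset.range k, W l (a + i) = P l (a + k) - P l a := by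
  intro k
  induction k with
  | zero => simp
  | succ k ih =>
    rw [Finset.sum_range_succ, ih, ← Nat.add_assoc, P_succ]
    ring

lemma take_rotate_sum (l : List ℤ) (a k : ℕ) (hk : k ≤ l.length) :
    ((l.rotate a).take k).sum = P l (a + k) - P l a := by
  rcases Nat.eq_zero_or_pos l.length with h0 | h0
  · have : l = [] := List.length_eq_zero_iff.mp h0
    subst this
    simp [P, W]
  have hlen : (l.rotate a).length = l.length := List.length_rotate l a
  rw [← P_eq_take (l.rotate a) k (by rw [hlen]; exact hk)]
  have hW : ∀ i : ℕ, W (l.rotate a) i = W l (a + i) := by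
    intro i
    have hi : i % l.length < l.length := Nat.mod_lt _ h0
    have hidx : (i % l.length + a) % l.length = (a + i) % l.length := by
      conv_rhs => rw [Nat.add_comm a i]
      rw [Nat.mod_add_mod]
    show (l.rotate a).getD (i % (l.rotate a).length) 0 = l.getD ((a + i) % l.length) 0
    rw [hlen, List.getD_eq_getElem _ _ (show i % l.length < (l.rotate a).length by
        rw [hlen]; exact hi),
      List.getD_eq_getElem _ _ (Nat.mod_lt _ h0), List.getElem_rotate]
    congr 1
  unfold P
  rw [Finset.sum_congr rfl (fun i _ => hW i)]
  exact sum_range_W l a k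

/-- Existence half of the cycle lemma. -/
lemma exists_good_rotate (l : List ℤ) (h0 : 0 < l.length) (hs : l.sum = 1) :
    ∃ j < l.length, Good (l.rotate j) := by
  set N := l.length with hN
  obtain ⟨j0, hj0m, hj0⟩ := Finset.exists_min_image (Finset.range N) (P l)
    ⟨0, Finset.mem_range.mpr h0⟩
  set S : Finset ℕ := (Finset.range N).filter (fun i => ∀ i' ∈ Finset.range N, P l i ≤ P l i')
    with hS
  have hSne : S.Nonempty := ⟨j0, Finset.mem_filter.mpr ⟨hj0m, hj0⟩⟩
  set j := S.max' hSne with hj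
  have hjS : j ∈ S := S.max'_mem hSne
  have hjN : j < N := Finset.mem_range.mp (Finset.mem_filter.mp hjS).1
  have hmin : ∀ i < N, P l j ≤ P l i := by
    intro i hi
    exact (Finset.mem_filter.mp hjS).2 i (Finset.mem_range.mpr hi)
  have hstrict : ∀ i, j < i → i < N → P l j < P l i := by
    intro i hji hiN
    rcases lt_or_eq_of_le (hmin i hiN) with h | h
    · exact h
    · exfalso
      have hiS : i ∈ S := Finset.mem_filter.mpr ⟨Finset.mem_range.mpr hiN,
        fun i' hi' => h ▸ (Finset.mem_filter.mp hjS).2 i' hi'⟩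
      have := S.le_max' i hiS
      omega
  refine ⟨j, hjN, ?_⟩
  intro k hk1 hkN
  rw [List.length_rotate] at hkN
  rw [take_rotate_sum l j k hkN]
  rcases lt_or_ge (j + k) N with hc | hc
  · have := hstrict (j + k) (by omega) hc
    omega
  · obtain ⟨t, ht, htlt⟩ : ∃ t, j + k = t + N ∧ t < N := ⟨j + k - N, by omega, by omega⟩
    have hP : P l (j + k) = P l t + 1 := by
      rw [ht, hN, P_add_length, hs]
    have hle : P l j ≤ P l t := hmin _ htlt
    omega

/-- Uniqueness half of the cycle lemma (strict form). -/
lemma not_both_good (l : List ℤ) (hs : l.sum = 1) {a c : ℕ}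
    (hac : a < c) (hc : c < l.length) (hga : Good (l.rotate a)) (hgc : Good (l.rotate c)) :
    False := by
  set N := l.length with hN
  have h1 := hga (c - a) (by omega) (by rw [List.length_rotate]; omega)
  rw [take_rotate_sum l a (c - a) (by omega)] at h1
  have hca : a + (c - a) = c := by omega
  rw [hca] at h1
  have h2 := hgc (a + N - c) (by omega) (by rw [List.length_rotate]; omega)
  rw [take_rotate_sum l c (a + N - c) (by omega)] at h2
  have hcc : c + (a + N - c) = a + N := by omega
  rw [hcc, hN, P_add_length, hs] at h2
  omega

lemma good_rotate_unique (l : List ℤ) (hs : l.sum = 1) {a c : ℕ}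
    (ha : a < l.length) (hc : c < l.length) (hga : Good (l.rotate a))
    (hgc : Good (l.rotate c)) : a = c := by
  rcases lt_trichotomy a c with h | h | h
  · exact absurd (not_both_good l hs h hc hga hgc) (by simp)
  · exact h
  · exact absurd (not_both_good l hs h ha hgc hga) (by simp)

/-- A good list with steps in `{1, -m}` starts with `1`. -/
lemma good_eq_cons (m : ℕ) (hm : 1 ≤ m) (w : List ℤ) (h0 : 0 < w.length)
    (hsteps : Steps m w) (hgood : Good w) : w = 1 :: w.tail := by
  obtain ⟨a, t, rfl⟩ := List.exists_cons_of_ne_nil (List.length_pos_iff.mp h0)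
  suffices ha : a = 1 by rw [ha]; rfl
  have hmem : a ∈ a :: t := List.mem_cons_self (a := a) (l := t)
  rcases hsteps a hmem with h | h
  · exact h
  · exfalso
    have := hgood 1 le_rfl (by simpa using Nat.succ_le_of_lt (Nat.pos_of_ne_zero (by simp)))
    simp only [List.take_succ_cons, List.take_zero, List.sum_cons, List.sum_nil, add_zero] at this
    rw [h] at this
    have : (1 : ℤ) ≤ (m : ℤ) := by exact_mod_cast hm
    omega

section Equivs

variable (m L : ℕ)

/-- Dyck paths of length `L`. -/
def DyckT := {l : List ℤ // l.length = L ∧ IsMDyckPath m l}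

/-- "Ballot" sequences: length `N`, steps, sum `1`, all partial sums positive. -/
def BallotT (N : ℕ) := {l : List ℤ // l.length = N ∧ Steps m l ∧ l.sum = 1 ∧ Good l}

/-- All sequences of length `N` with steps in `{1,-m}` and sum `1`. -/
def TotT (N : ℕ) := {l : List ℤ // l.length = N ∧ Steps m l ∧ l.sum = 1}

lemma card_dyck_eq_card_ballot (hm : 1 ≤ m) :
    Nat.card (DyckT m L) = Nat.card (BallotT m (L + 1)) := by
  refine Nat.card_eq_of_bijective (fun x => ⟨(1 : ℤ) :: x.1, ?_⟩) ⟨?_, ?_⟩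
  · obtain ⟨l, hlen, hsteps, hpos, hsum⟩ := x
    refine ⟨by simp [hlen], ?_, by simp [hsum], ?_⟩
    · intro s hs
      rcases List.mem_cons.mp hs with h | h
      · exact Or.inl h
      · exact hsteps s h
    · intro k hk1 hkN
      obtain ⟨k', rfl⟩ := Nat.exists_eq_add_of_le hk1
      rw [Nat.add_comm 1 k', List.take_succ_cons, List.sum_cons]
      show (0:ℤ) < 1 + (l.take k').sum
      have := hpos k'
      omega
  · intro x y hxy
    have : (1 : ℤ) :: x.1 = 1 :: y.1 := congrArg Subtype.val hxy
    exact Subtype.ext (List.cons_injective this)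
  · rintro ⟨w, hlen, hsteps, hsum, hgood⟩
    have h0 : 0 < w.length := by omega
    have hw : w = 1 :: w.tail := good_eq_cons m hm w h0 hsteps hgood
    have htlen : w.tail.length = L := by simp [List.length_tail, hlen]
    have htsum : w.tail.sum = 0 := by
      have h := congrArg List.sum hw
      rw [List.sum_cons] at h
      omega
    refine ⟨⟨w.tail, htlen, ?_, ?_, htsum⟩, ?_⟩
    · intro s hs
      exact hsteps s (List.mem_of_mem_tail hs)
    · intro k
      rcases le_or_gt k w.tail.length with hk | hk
      · have hgk := hgood (k + 1) (by omega) (by omega)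
        rw [hw, List.take_succ_cons, List.sum_cons] at hgk
        omega
      · rw [List.take_of_length_le (le_of_lt hk), htsum]
    · exact Subtype.ext hw.symm

lemma card_tot_eq (N : ℕ) (hN : 0 < N) :
    Nat.card (TotT m N) = Nat.card (BallotT m N) * N := by
  have key : Nat.card (BallotT m N × Fin N) = Nat.card (TotT m N) := by
    refine Nat.card_eq_of_bijective
      (fun x => ⟨x.1.1.rotate x.2.val, ?_, ?_, ?_⟩) ⟨?_, ?_⟩
    · rw [List.length_rotate]; exact x.1.2.1
    · intro s hs
      exact x.1.2.2.1 s ((List.rotate_perm _ _).mem_iff.mp hs)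
    · rw [(List.rotate_perm _ _).sum_eq]; exact x.1.2.2.2.1
    · rintro ⟨⟨b, hblen, hbsteps, hbsum, hbgood⟩, i⟩ ⟨⟨b', hblen', hbsteps', hbsum', hbgood'⟩, i'⟩ hh
      have h : b.rotate i.val = b'.rotate i'.val := congrArg Subtype.val hh
      have hwsum : (b.rotate i.val).sum = 1 := by
        rw [(List.rotate_perm _ _).sum_eq]; exact hbsum
      have hback : (b.rotate i.val).rotate (N - i.val) = b := by
        rw [List.rotate_rotate, show i.val + (N - i.val) = N from by omega, ← hblen,
          List.rotate_length]
      have hback' : (b.rotate i.val).rotate (N - i'.val) = b' := by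
        rw [h, List.rotate_rotate, show i'.val + (N - i'.val) = N from by omega, ← hblen',
          List.rotate_length]
      have hga : Good ((b.rotate i.val).rotate ((N - i.val) % N)) := by
        rw [show (N - i.val) % N = (N - i.val) % (b.rotate i.val).length from by
            rw [List.length_rotate, hblen],
          List.rotate_mod, hback]
        exact hbgood
      have hgc : Good ((b.rotate i.val).rotate ((N - i'.val) % N)) := by
        rw [show (N - i'.val) % N = (N - i'.val) % (b.rotate i.val).length from by
            rw [List.length_rotate, hblen],
          List.rotate_mod, hback']
        exact hbgood'
      have hlenw : (b.rotate i.val).length = N := by rw [List.length_rotate, hblen]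
      have huniq := good_rotate_unique (b.rotate i.val) hwsum
        (a := (N - i.val) % N) (c := (N - i'.val) % N)
        (by rw [hlenw]; exact Nat.mod_lt _ hN) (by rw [hlenw]; exact Nat.mod_lt _ hN)
        hga hgc
      have hi : i.val < N := i.2
      have hi' : i'.val < N := i'.2
      have hii : i.val = i'.val := by
        rcases Nat.eq_zero_or_pos i.val with h1 | h1 <;>
          rcases Nat.eq_zero_or_pos i'.val with h2 | h2
        · omega
        · rw [h1, Nat.sub_zero, Nat.mod_self, Nat.mod_eq_of_lt (by omega)] at huniq; omega
        · rw [h2, Nat.sub_zero, Nat.mod_self, Nat.mod_eq_of_lt (by omega)] at huniq; omega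
        · rw [Nat.mod_eq_of_lt (by omega), Nat.mod_eq_of_lt (by omega)] at huniq; omega
      have hbb : b = b' := by rw [← hback, ← hback', hii]
      subst hbb
      have : i = i' := Fin.ext hii
      subst this
      rfl
    · rintro ⟨w, hwlen, hwsteps, hwsum⟩
      obtain ⟨j, hjN, hjgood⟩ := exists_good_rotate w (by omega) hwsum
      refine ⟨⟨⟨w.rotate j, ?_, ?_, ?_, hjgood⟩,
        ⟨(N - j) % N, Nat.mod_lt _ hN⟩⟩, ?_⟩
      · rw [List.length_rotate]; exact hwlen
      · intro s hs; exact hwsteps s ((List.rotate_perm _ _).mem_iff.mp hs)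
      · rw [(List.rotate_perm _ _).sum_eq]; exact hwsum
      · apply Subtype.ext
        show (w.rotate j).rotate ((N - j) % N) = w
        rw [show (N - j) % N = (N - j) % (w.rotate j).length from by
            rw [List.length_rotate, hwlen],
          List.rotate_mod, List.rotate_rotate,
          show j + (N - j) = N from by omega, ← hwlen, List.rotate_length]
  rw [← key, Nat.card_prod, Nat.card_eq_fintype_card (α := Fin N), Fintype.card_fin]

lemma card_tot (n : ℕ) (hm : 1 ≤ m) :
    Nat.card (TotT m ((m + 1) * n + 1)) = ((m + 1) * n + 1).choose n := by
  set N := (m + 1) * n + 1 with hNdef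
  have : Nat.card {s : Finset (Fin N) // s.card = n} = Nat.card (TotT m N) := by
    refine Nat.card_eq_of_bijective
      (fun s => ⟨List.ofFn (fun i : Fin N => if i ∈ s.1 then -(m : ℤ) else 1), ?_, ?_, ?_⟩)
      ⟨?_, ?_⟩
    · simp [hNdef]
    · intro x hx
      rw [List.mem_ofFn] at hx
      obtain ⟨i, hi⟩ := hx
      by_cases h : i ∈ s.1
      · right; rw [← hi]; simp [h]
      · left; rw [← hi]; simp [h]
    · rw [List.sum_ofFn]
      rw [← Finset.sum_add_sum_compl s.1]
      have h1 : ∑ i ∈ s.1, (if i ∈ s.1 then -(m : ℤ) else 1) = -(m : ℤ) * n := by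
        rw [Finset.sum_congr rfl (fun i hi => if_pos hi), Finset.sum_const, s.2]
        push_cast
        ring
      have h2 : ∑ i ∈ s.1ᶜ, (if i ∈ s.1 then -(m : ℤ) else 1) = (m : ℤ) * n + 1 := by
        rw [Finset.sum_congr rfl (fun i hi => if_neg (Finset.mem_compl.mp hi)),
          Finset.sum_const, Finset.card_compl, s.2, Fintype.card_fin]
        have hc : N - n = m * n + 1 := by
          have : N = m * n + n + 1 := by rw [hNdef]; ring
          omega
        rw [hc]
        push_cast
        ring
      rw [h1, h2]
      ring
    · intro s t hst
      have h : (List.ofFn fun i : Fin N => if i ∈ s.1 then -(m : ℤ) else 1)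
          = List.ofFn fun i : Fin N => if i ∈ t.1 then -(m : ℤ) else 1 :=
        congrArg Subtype.val hst
      have hfun := List.ofFn_injective h
      have hne : -(m : ℤ) ≠ 1 := by
        have : (1 : ℤ) ≤ (m : ℤ) := by exact_mod_cast hm
        omega
      apply Subtype.ext
      ext i
      have hfi := congrFun hfun i
      by_cases hi : i ∈ s.1 <;> by_cases hj : i ∈ t.1 <;>
        simp only [hi, hj, if_pos, if_neg, not_false_iff] at hfi ⊢
      · exact absurd hfi hne
      · exact absurd hfi.symm hne
    · rintro ⟨w, hwlen, hwsteps, hwsum⟩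
      set f : Fin N → ℤ := fun i => w.getD i.val 0 with hf
      have hget : ∀ i : Fin N, f i ∈ w := by
        intro i
        have hi : i.val < w.length := by rw [hwlen]; exact i.2
        show w.getD i.val 0 ∈ w
        rw [List.getD_eq_getElem _ _ hi]
        exact List.getElem_mem hi
      set s : Finset (Fin N) := Finset.univ.filter (fun i => f i = -(m : ℤ)) with hs
      have hofn : List.ofFn (fun i : Fin N => if i ∈ s then -(m : ℤ) else 1) = w := by
        have hfeq : (fun i : Fin N => if i ∈ s then -(m : ℤ) else 1) = f := by
          funext i
          by_cases hi : i ∈ s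
          · rw [if_pos hi]
            exact ((Finset.mem_filter.mp hi).2).symm
          · rw [if_neg hi]
            rcases hwsteps (f i) (hget i) with h | h
            · exact h.symm
            · exact absurd (Finset.mem_filter.mpr ⟨Finset.mem_univ i, h⟩) hi
        rw [hfeq]
        apply List.ext_getElem (by simp [hwlen, hNdef])
        intro k h1 h2
        rw [List.getElem_ofFn]
        show w.getD _ 0 = w[k]
        rw [List.getD_eq_getElem _ _ h2]
      have hsum2 : (1 : ℤ) = -(m : ℤ) * s.card + ((N : ℤ) - s.card) := by
        rw [← hwsum]
        conv_lhs => rw [← hofn]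
        rw [List.sum_ofFn, ← Finset.sum_add_sum_compl s]
        rw [Finset.sum_congr rfl (fun i hi => if_pos hi), Finset.sum_const]
        rw [Finset.sum_congr rfl (fun i (hi : i ∈ sᶜ) => if_neg (Finset.mem_compl.mp hi)),
          Finset.sum_const, Finset.card_compl, Fintype.card_fin]
        have hcle : s.card ≤ N := by
          calc s.card ≤ Fintype.card (Fin N) := Finset.card_le_univ s
          _ = N := Fintype.card_fin N
        have hNval : N = 1 + m * n + n := by rw [hNdef]; ring
        have hcle2 : s.card ≤ 1 + m * n + n := by omega
        simp only [nsmul_eq_mul, smul_eq_mul]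
        rw [Nat.cast_sub hcle]
        push_cast
        ring
      have hcard : s.card = n := by
        have hNZ : (N : ℤ) = (m : ℤ) * n + n + 1 := by rw [hNdef]; push_cast; ring
        have hkey : ((m + 1 : ℕ) * s.card : ℤ) = ((m + 1 : ℕ) * n : ℤ) := by
          push_cast
          linarith [hsum2, hNZ]
        have hkey' : (m + 1) * s.card = (m + 1) * n := by exact_mod_cast hkey
        exact Nat.eq_of_mul_eq_mul_left (by omega) hkey'
      exact ⟨⟨s, hcard⟩, Subtype.ext hofn⟩
  rw [← this, Nat.card_eq_fintype_card, Fintype.card_finset_len, Fintype.card_fin]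

end Equivs

end MDyckAux

/-- The number of `m`-Dyck paths from `(0,0)` to `((m+1)n, 0)` equals the
Fuss–Catalan number `C_n^{(m+1)} = (1/(mn+1)) binom((m+1)n, n)`. -/
theorem stmt_2 (m n : ℕ) (hm : 1 ≤ m) :
    (Nat.card {l : List ℤ // l.length = (m + 1) * n ∧ IsMDyckPath m l} : ℚ)
      = (1 / ((m * n + 1 : ℕ) : ℚ)) * (((m + 1) * n).choose n : ℚ) := by
  set L := (m + 1) * n with hL
  set N := L + 1 with hN
  set D := Nat.card {l : List ℤ // l.length = L ∧ IsMDyckPath m l} with hD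
  have h1 : D = Nat.card (MDyckAux.BallotT m N) :=
    MDyckAux.card_dyck_eq_card_ballot m L hm
  have h2 : Nat.card (MDyckAux.TotT m N) = Nat.card (MDyckAux.BallotT m N) * N :=
    MDyckAux.card_tot_eq m N (by omega)
  have h3 : Nat.card (MDyckAux.TotT m N) = N.choose n := MDyckAux.card_tot m n hm
  have hDN : D * N = N.choose n := by rw [h1, ← h2, h3]
  -- binomial identity : N * L.choose n = N.choose n * (m*n+1)
  have hid : N * L.choose n = N.choose n * (m * n + 1) := by
    have hs := Nat.add_one_mul_choose_eq L n
    have hr := Nat.choose_succ_right_eq N n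
    have hsub : N - n = m * n + 1 := by
      have : L = m * n + n := by rw [hL]; ring
      omega
    calc N * L.choose n = Nat.succ L * Nat.choose L n := by rw [hN]
      _ = Nat.choose (Nat.succ L) (Nat.succ n) * Nat.succ n := hs
      _ = N.choose (n + 1) * (n + 1) := by rw [hN]
      _ = N.choose n * (N - n) := hr
      _ = N.choose n * (m * n + 1) := by rw [hsub]
  have hfinal : D * (m * n + 1) = L.choose n := by
    have hN0 : 0 < N := by omega
    have : N * (D * (m * n + 1)) = N * L.choose n := by
      rw [hid, ← hDN]; ring
    exact Nat.eq_of_mul_eq_mul_left hN0 this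
  have hq : (D : ℚ) * ((m * n + 1 : ℕ) : ℚ) = (L.choose n : ℚ) := by
    exact_mod_cast congrArg (fun x : ℕ => (x : ℚ)) hfinal
  have hne : ((m * n + 1 : ℕ) : ℚ) ≠ 0 := by
    exact_mod_cast Nat.succ_ne_zero (m * n)
  push_cast at hq
  field_simp
  push_cast
  linarith [hq]
end

section
/- If F(t) is the unique formal power series with F(0)=1 satisfying F = ∏_{i=0}^{m} (1 + x_i t F), then for all n ≥ k ≥ 0, the coefficient of t^{n-k} in F(t)^{k+1} equals ((k+1)/(n+1)) · Σ_{j_0+...+j_m = n-k} ∏_{i=0}^{m} binom(n+1, j_i) x_i^{j_i}. -/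
open PowerSeries Finset

/-- Key lemma: if `F * G = 1` then the coefficient of `t^s` in
`G^(s+1) * (F + t F')` vanishes for `s ≥ 1`. -/
lemma lagrange_key_aux {R : Type*} [CommRing R] [IsDomain R] [CharZero R]
    (F G : PowerSeries R) (hFG : F * G = 1) (s : ℕ) (hs : 1 ≤ s) :
    (PowerSeries.coeff (R := R) s) (G ^ (s + 1)
      * (F + PowerSeries.X * (PowerSeries.derivative R F))) = 0 := by
  have hF0 : F ≠ 0 := by
    rintro rfl; simp at hFG
  have hFs : F ^ (s + 1) ≠ 0 := pow_ne_zero _ hF0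
  have hFFs : F * F ^ (s - 1) = F ^ s := by
    rw [← pow_succ']; congr 1; omega
  have hDGs : F ^ (s + 1) * (PowerSeries.derivative R (G ^ s))
      = -((s : PowerSeries R) * (PowerSeries.X ^ 0 * 1) * (PowerSeries.derivative R F)) := by
    have h0 : (F * G) ^ s = 1 := by rw [hFG, one_pow]
    have h1 : PowerSeries.derivative R (F ^ s * G ^ s) = 0 := by
      rw [← mul_pow, h0]; exact Derivation.map_one_eq_zero _
    rw [Derivation.leibniz, smul_eq_mul, smul_eq_mul] at h1
    have h2 : F ^ s * (PowerSeries.derivative R (G ^ s))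
        = -(G ^ s * (PowerSeries.derivative R (F ^ s))) := by linear_combination h1
    have h3 : PowerSeries.derivative R (F ^ s)
        = (s : PowerSeries R) * (F ^ (s - 1) * PowerSeries.derivative R F) := by
      rw [Derivation.leibniz_pow]
      simp only [smul_eq_mul, nsmul_eq_mul]
    calc F ^ (s + 1) * (PowerSeries.derivative R (G ^ s))
        = F * (F ^ s * PowerSeries.derivative R (G ^ s)) := by ring
      _ = -(F * (G ^ s * ((s : PowerSeries R) * (F ^ (s - 1) * PowerSeries.derivative R F)))) := by
          rw [h2, h3]; ring
      _ = -((s : PowerSeries R) * ((F * F ^ (s - 1)) * G ^ s * PowerSeries.derivative R F)) := by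
          ring
      _ = -((s : PowerSeries R) * (PowerSeries.X ^ 0 * 1) * (PowerSeries.derivative R F)) := by
          rw [hFFs, ← mul_pow, hFG, one_pow]; ring
  have hid : (s : PowerSeries R)
        * (G ^ (s + 1) * (F + PowerSeries.X * (PowerSeries.derivative R F)))
      = (s : PowerSeries R) * G ^ s - PowerSeries.X * PowerSeries.derivative R (G ^ s) := by
    apply mul_left_cancel₀ hFs
    have e1 : F ^ (s + 1) * G ^ (s + 1) = 1 := by rw [← mul_pow, hFG, one_pow]
    have e2 : F ^ (s + 1) * G ^ s = F := by
      calc F ^ (s + 1) * G ^ s = F * (F ^ s * G ^ s) := by ring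
        _ = F * 1 := by rw [← mul_pow, hFG, one_pow]
        _ = F := mul_one F
    calc F ^ (s + 1) * ((s : PowerSeries R)
          * (G ^ (s + 1) * (F + PowerSeries.X * (PowerSeries.derivative R F))))
        = (s : PowerSeries R) * ((F ^ (s + 1) * G ^ (s + 1))
            * (F + PowerSeries.X * (PowerSeries.derivative R F))) := by ring
      _ = (s : PowerSeries R) * (F + PowerSeries.X * (PowerSeries.derivative R F)) := by
          rw [e1, one_mul]
      _ = (s : PowerSeries R) * (F ^ (s + 1) * G ^ s)
          - PowerSeries.X * (F ^ (s + 1) * (PowerSeries.derivative R (G ^ s))) := by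
          rw [e2, hDGs]; push_cast; ring
      _ = F ^ (s + 1) * ((s : PowerSeries R) * G ^ s
            - PowerSeries.X * PowerSeries.derivative R (G ^ s)) := by ring
  have hc := congrArg (PowerSeries.coeff (R := R) s) hid
  have hXc : (PowerSeries.coeff (R := R) s) (PowerSeries.X * PowerSeries.derivative R (G ^ s))
      = (PowerSeries.coeff (R := R) s) (G ^ s) * s := by
    obtain ⟨s', rfl⟩ : ∃ s', s = s' + 1 := ⟨s - 1, by omega⟩
    rw [PowerSeries.coeff_succ_X_mul, PowerSeries.coeff_derivative]
    push_cast; ring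
  have hsc : ((s : PowerSeries R)) = PowerSeries.C (R := R) ((s : R)) := by push_cast; rfl
  rw [hsc, map_sub, PowerSeries.coeff_C_mul, PowerSeries.coeff_C_mul, hXc] at hc
  have : (s : R) * (PowerSeries.coeff (R := R) s) (G ^ (s + 1)
      * (F + PowerSeries.X * (PowerSeries.derivative R F))) = 0 := by
    rw [hc]; ring
  have hs' : (s : R) ≠ 0 := Nat.cast_ne_zero.mpr (by omega)
  exact (mul_eq_zero.mp this).resolve_left hs' 

lemma lagrange_main {R : Type*} [CommRing R] [IsDomain R] [CharZero R]
    (F : PowerSeries R) (hF0 : PowerSeries.constantCoeff (R := R) F = 1)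
    {ι : Type*} [Fintype ι] [DecidableEq ι] (x : ι → R)
    (hF : F = ∏ i : ι, (1 + PowerSeries.C (R := R) (x i) * PowerSeries.X * F))
    (n k : ℕ) (hk : k ≤ n) :
    ((n : R) + 1) * PowerSeries.coeff (R := R) (n - k) (F ^ (k + 1))
      = ((k : R) + 1) * ∑ d ∈ Fintype.piFinset (fun _ : ι => range (n + 2)),
          (if ∑ i, d i = n - k then ∏ i, ((n+1).choose (d i) : R) * x i ^ (d i) else 0) := by
  classical
  set DF := PowerSeries.derivative R F with hDF
  set fd := F + PowerSeries.X * DF with hfd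
  set G := PowerSeries.invOfUnit F 1 with hG
  have hFG : F * G = 1 := PowerSeries.mul_invOfUnit F 1 (by rw [hF0]; rfl)
  have hG0 : PowerSeries.constantCoeff (R := R) G = 1 := by
    rw [hG, PowerSeries.constantCoeff_invOfUnit]; rfl
  have hfd0 : PowerSeries.constantCoeff (R := R) fd = 1 := by
    rw [hfd, map_add, map_mul, PowerSeries.constantCoeff_X, zero_mul, add_zero, hF0]
  have hbin : ∀ a : PowerSeries R, (1 + a) ^ (n + 1)
      = ∑ j ∈ range (n + 2), a ^ j * ((n+1).choose j : PowerSeries R) := by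
    intro a; rw [add_comm, add_pow]; simp
  have hexp : F ^ (n + 1) = ∑ d ∈ Fintype.piFinset (fun _ : ι => range (n + 2)),
      PowerSeries.C (R := R) (∏ i, ((n+1).choose (d i) : R) * x i ^ (d i))
        * (PowerSeries.X ^ (∑ i, d i) * F ^ (∑ i, d i)) := by
    conv_lhs => rw [hF]
    rw [← Finset.prod_pow]
    calc ∏ i : ι, (1 + PowerSeries.C (R := R) (x i) * PowerSeries.X * F) ^ (n + 1)
        = ∏ i : ι, ∑ j ∈ range (n + 2),
            (PowerSeries.C (R := R) (x i) * PowerSeries.X * F) ^ j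
              * ((n+1).choose j : PowerSeries R) :=
          Finset.prod_congr rfl fun i _ => hbin _
      _ = ∑ d ∈ Fintype.piFinset (fun _ : ι => range (n + 2)),
            ∏ i : ι, (PowerSeries.C (R := R) (x i) * PowerSeries.X * F) ^ (d i)
              * ((n+1).choose (d i) : PowerSeries R) := Finset.prod_univ_sum _ _
      _ = _ := Finset.sum_congr rfl fun d _ => by
          simp only [mul_pow, Finset.prod_mul_distrib, Finset.prod_pow_eq_pow_sum,
            ← map_pow, ← map_prod]
          rw [show (∏ i : ι, (((n+1).choose (d i) : ℕ) : PowerSeries R))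
              = PowerSeries.C (R := R) (∏ i : ι, (((n+1).choose (d i) : ℕ) : R)) by
            rw [map_prod]; exact Finset.prod_congr rfl fun i _ => (map_natCast _ _).symm]
          rw [map_mul]
          ring
  have hcoeff : PowerSeries.coeff (R := R) (n - k) (F ^ k * fd)
      = ∑ d ∈ Fintype.piFinset (fun _ : ι => range (n + 2)),
          (if ∑ i, d i = n - k then ∏ i, ((n+1).choose (d i) : R) * x i ^ (d i) else 0) := by
    have e1 : F ^ (n + 1) * G ^ (n + 1) = 1 := by rw [← mul_pow, hFG, one_pow]
    have h5 : F ^ k * fd = ∑ d ∈ Fintype.piFinset (fun _ : ι => range (n + 2)),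
        PowerSeries.C (R := R) (∏ i, ((n+1).choose (d i) : R) * x i ^ (d i))
          * (PowerSeries.X ^ (∑ i, d i)
              * (F ^ (∑ i, d i) * G ^ (n + 1) * (F ^ k * fd))) := by
      calc F ^ k * fd = (F ^ (n+1) * G ^ (n+1)) * (F ^ k * fd) := by rw [e1, one_mul]
        _ = (∑ d ∈ Fintype.piFinset (fun _ : ι => range (n + 2)),
              PowerSeries.C (R := R) (∏ i, ((n+1).choose (d i) : R) * x i ^ (d i))
                * (PowerSeries.X ^ (∑ i, d i) * F ^ (∑ i, d i)))
            * (G ^ (n+1) * (F ^ k * fd)) := by rw [← hexp]; ring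
        _ = _ := by rw [Finset.sum_mul]; exact Finset.sum_congr rfl fun d _ => by ring
    rw [h5, map_sum]
    refine Finset.sum_congr rfl fun d _ => ?_
    rw [PowerSeries.coeff_C_mul, PowerSeries.coeff_X_pow_mul']
    by_cases hle : (∑ i, d i) ≤ n - k
    · rw [if_pos hle]
      have hcan : F ^ (∑ i, d i) * G ^ (n + 1) * (F ^ k * fd)
          = G ^ ((n - k - ∑ i, d i) + 1) * fd := by
        have hsplit : G ^ (n + 1)
            = G ^ ((∑ i, d i) + k) * G ^ ((n - k - ∑ i, d i) + 1) := by
          rw [← pow_add]; congr 1; omega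
        calc F ^ (∑ i, d i) * G ^ (n + 1) * (F ^ k * fd)
            = (F ^ ((∑ i, d i) + k) * G ^ ((∑ i, d i) + k))
              * (G ^ ((n - k - ∑ i, d i) + 1) * fd) := by
              rw [hsplit, pow_add F]; ring
          _ = G ^ ((n - k - ∑ i, d i) + 1) * fd := by
              rw [← mul_pow, hFG, one_pow, one_mul]
      rw [hcan]
      by_cases hs : (∑ i, d i) = n - k
      · rw [if_pos hs, hs]
        have h0 : n - k - (n - k) = 0 := by omega
        rw [h0, zero_add, pow_one]
        simp [PowerSeries.coeff_zero_eq_constantCoeff, hG0, hfd0]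
      · rw [if_neg hs]
        have hs1 : 1 ≤ n - k - ∑ i, d i := by omega
        have := lagrange_key_aux F G hFG (n - k - ∑ i, d i) hs1
        rw [← hDF, ← hfd] at this
        have hnk : n - k - ∑ i, d i = n - k - ∑ i, d i := rfl
        rw [show n - k - (∑ i, d i) = n - k - ∑ i, d i from rfl] at *
        rw [this, mul_zero]
    · rw [if_neg hle, if_neg (by omega), mul_zero]
  -- now the derivative relation
  have hder : ((n : R) + 1) * PowerSeries.coeff (R := R) (n - k) (F ^ (k + 1))
      = ((k : R) + 1) * PowerSeries.coeff (R := R) (n - k) (F ^ k * fd) := by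
    have hXF : PowerSeries.derivative R (PowerSeries.X * F) = fd := by
      rw [Derivation.leibniz, smul_eq_mul, smul_eq_mul, PowerSeries.derivative_X, hfd, ← hDF]
      ring
    have hpow : PowerSeries.derivative R ((PowerSeries.X * F) ^ (k + 1))
        = ((k : PowerSeries R) + 1) * ((PowerSeries.X * F) ^ k * fd) := by
      rw [Derivation.leibniz_pow, hXF]
      simp only [smul_eq_mul, nsmul_eq_mul, Nat.add_sub_cancel]
      push_cast; ring
    have h6 := PowerSeries.coeff_derivative ((PowerSeries.X * F) ^ (k + 1)) n
    rw [hpow] at h6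
    have h7 : (PowerSeries.coeff (R := R) (n + 1)) ((PowerSeries.X * F) ^ (k + 1))
        = PowerSeries.coeff (R := R) (n - k) (F ^ (k + 1)) := by
      rw [mul_pow, PowerSeries.coeff_X_pow_mul', if_pos (by omega : k + 1 ≤ n + 1)]
      have e : n + 1 - (k + 1) = n - k := by omega
      rw [e]
    have h8 : (PowerSeries.coeff (R := R) n) (((k : PowerSeries R) + 1)
          * ((PowerSeries.X * F) ^ k * fd))
        = ((k : R) + 1) * PowerSeries.coeff (R := R) (n - k) (F ^ k * fd) := by
      have : ((k : PowerSeries R) + 1) = PowerSeries.C (R := R) ((k : R) + 1) := by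
        rw [map_add, map_natCast, map_one]
      rw [this, PowerSeries.coeff_C_mul, mul_pow, mul_assoc,
        PowerSeries.coeff_X_pow_mul', if_pos (by omega : k ≤ n)]
    rw [h7, h8] at h6
    linear_combination -h6
  rw [hder, hcoeff]

/-- If `F` is the formal power series with constant term `1` satisfying
`F = ∏_{i=0}^{m} (1 + x_i t F)`, then for `n ≥ k ≥ 0` the coefficient of
`t^{n-k}` in `F^{k+1}` equals
`((k+1)/(n+1)) Σ_{j_0+⋯+j_m = n-k} ∏_i binom(n+1, j_i) x_i^{j_i}`. -/
theorem stmt_3 (m : ℕ) (hm : 1 ≤ m)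
    (F : PowerSeries (MvPolynomial (Fin (m + 1)) ℚ))
    (hF0 : PowerSeries.constantCoeff (R := MvPolynomial (Fin (m + 1)) ℚ) F = 1)
    (hF : F = ∏ i : Fin (m + 1),
      (1 + PowerSeries.C (R := MvPolynomial (Fin (m + 1)) ℚ) (MvPolynomial.X i)
            * PowerSeries.X * F))
    (n k : ℕ) (hk : k ≤ n) :
    PowerSeries.coeff (R := MvPolynomial (Fin (m + 1)) ℚ) (n - k) (F ^ (k + 1))
      = MvPolynomial.C (((k : ℚ) + 1) / ((n : ℚ) + 1))
        * ∑ j ∈ Finset.Nat.antidiagonalTuple (m + 1) (n - k),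
            ∏ i : Fin (m + 1),
              ((n + 1).choose (j i) : MvPolynomial (Fin (m + 1)) ℚ)
                * MvPolynomial.X i ^ (j i) := by
  have h := lagrange_main F hF0 (fun i => MvPolynomial.X i) hF n k hk
  have hsum : (∑ d ∈ Fintype.piFinset (fun _ : Fin (m + 1) => range (n + 2)),
        (if ∑ i, d i = n - k then
          ∏ i, ((n+1).choose (d i) : MvPolynomial (Fin (m + 1)) ℚ)
            * MvPolynomial.X i ^ (d i) else 0))
      = ∑ j ∈ Finset.Nat.antidiagonalTuple (m + 1) (n - k),
          ∏ i : Fin (m + 1),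
            ((n + 1).choose (j i) : MvPolynomial (Fin (m + 1)) ℚ)
              * MvPolynomial.X i ^ (j i) := by
    rw [← Finset.sum_filter]
    apply Finset.sum_congr _ (fun _ _ => rfl)
    ext d
    simp only [Finset.mem_filter, Fintype.mem_piFinset, Finset.mem_range,
      Finset.Nat.mem_antidiagonalTuple]
    constructor
    · rintro ⟨-, h2⟩; exact h2
    · intro h1
      refine ⟨fun i => ?_, h1⟩
      have : d i ≤ ∑ j, d j := Finset.single_le_sum (fun _ _ => Nat.zero_le _) (mem_univ i)
      omega
  rw [hsum] at h
  have hCn : ((n : MvPolynomial (Fin (m + 1)) ℚ) + 1)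
      = MvPolynomial.C ((n : ℚ) + 1) := by rw [map_add, map_natCast, map_one]
  have hCk : ((k : MvPolynomial (Fin (m + 1)) ℚ) + 1)
      = MvPolynomial.C ((k : ℚ) + 1) := by rw [map_add, map_natCast, map_one]
  rw [hCn, hCk] at h
  have hne : (MvPolynomial.C ((n : ℚ) + 1) : MvPolynomial (Fin (m + 1)) ℚ) ≠ 0 := by
    rw [ne_eq, MvPolynomial.C_eq_zero]
    positivity
  apply mul_left_cancel₀ hne
  rw [h, ← mul_assoc, ← map_mul,
    show ((n : ℚ) + 1) * (((k : ℚ) + 1) / ((n : ℚ) + 1)) = (k : ℚ) + 1 by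
      field_simp]
end

section
/- If G(t) is the unique formal power series with G(0)=1 satisfying G = ∏_{i=0}^{m-1} (1 - x_i t G)^{-1}, then for all n ≥ k ≥ 0, the coefficient of t^{n-k} in G(t)^{k+1} equals ((k+1)/(n+1)) · Σ_{j_0+...+j_{m-1} = n-k} ∏_{i=0}^{m-1} binom(n+j_i, j_i) x_i^{j_i}. -/
open PowerSeries Finset

namespace Stmt4Aux

abbrev R (m : ℕ) := MvPolynomial (Fin m) ℚ

variable (m : ℕ)

/-- `g m n i = ∑_r C(n+r, r) x_i^r t^r = (1 - x_i t)^{-(n+1)}`. -/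
noncomputable def g (n : ℕ) (i : Fin m) : PowerSeries (R m) :=
  PowerSeries.mk fun r => ((n + r).choose r : R m) * MvPolynomial.X i ^ r

noncomputable def Psi (n : ℕ) : PowerSeries (R m) := ∏ i : Fin m, g m n i

noncomputable def Q : PowerSeries (R m) :=
  ∏ i : Fin m, (1 - PowerSeries.C (MvPolynomial.X i) * PowerSeries.X)

lemma one_sub_mul_g_succ (n : ℕ) (i : Fin m) :
    (1 - PowerSeries.C (MvPolynomial.X i) * PowerSeries.X) * g m (n + 1) i
      = g m n i := by
  ext r
  rw [sub_mul, one_mul, map_sub]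
  cases r with
  | zero => simp [g]
  | succ r =>
      rw [mul_assoc, coeff_C_mul, coeff_succ_X_mul]
      simp only [g, coeff_mk]
      have h : (n + 1 + (r + 1)).choose (r + 1) = (n + (r+1)).choose (r+1) + (n + 1 + r).choose r := by
        have e0 : n + 1 + (r + 1) = (n + r + 1) + 1 := by omega
        have e1 : n + (r + 1) = n + r + 1 := by omega
        have e2 : n + 1 + r = n + r + 1 := by omega
        rw [e0, e1, e2, Nat.choose_succ_succ, add_comm]
      rw [h]
      push_cast
      ring

lemma one_sub_mul_g_zero (i : Fin m) :
    (1 - PowerSeries.C (MvPolynomial.X i) * PowerSeries.X) * g m 0 i = 1 := by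
  ext r
  rw [sub_mul, one_mul, map_sub]
  cases r with
  | zero => simp [g]
  | succ r =>
      rw [mul_assoc, coeff_C_mul, coeff_succ_X_mul]
      simp [g, pow_succ, PowerSeries.coeff_one]
      ring

lemma Q_mul_Psi_succ (n : ℕ) : Q m * Psi m (n + 1) = Psi m n := by
  rw [Q, Psi, Psi, ← Finset.prod_mul_distrib]
  exact Finset.prod_congr rfl fun i _ => one_sub_mul_g_succ m n i

lemma Q_mul_Psi_zero : Q m * Psi m 0 = 1 := by
  rw [Q, Psi, ← Finset.prod_mul_distrib]
  simp only [one_sub_mul_g_zero]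
  exact Finset.prod_const_one

lemma Psi_succ (n : ℕ) : Psi m (n + 1) = Psi m 0 * Psi m n := by
  have h := Q_mul_Psi_succ m n
  have h0 := Q_mul_Psi_zero m
  linear_combination Psi m 0 * h - Psi m (n + 1) * h0

lemma Psi_eq_pow (n : ℕ) : Psi m n = Psi m 0 ^ (n + 1) := by
  induction n with
  | zero => simp
  | succ n ih => rw [Psi_succ, ih, pow_succ]; ring


local notation "D" => PowerSeries.derivative (R m)

lemma dPsi_zero : D (Psi m 0) = -(Psi m 0 ^ 2 * D (Q m)) := by
  have h0 := Q_mul_Psi_zero m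
  have h := congrArg (PowerSeries.derivative (R m)) h0
  rw [Derivation.leibniz, Derivation.map_one_eq_zero, smul_eq_mul, smul_eq_mul] at h
  linear_combination Psi m 0 * h - (D (Psi m 0)) * h0

lemma dPsi (n : ℕ) :
    D (Psi m n) = -(((n : PowerSeries (R m)) + 1) * (D (Q m) * Psi m (n + 1))) := by
  rw [Psi_eq_pow m n, Derivation.leibniz_pow, dPsi_zero, Psi_eq_pow m (n + 1)]
  simp only [smul_eq_mul, nsmul_eq_mul, Nat.add_sub_cancel]
  push_cast
  ring

lemma X_mul_d_C_mul_X_pow (c : R m) (a : ℕ) :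
    PowerSeries.X * D (PowerSeries.C c * PowerSeries.X ^ a)
      = (a : PowerSeries (R m)) * (PowerSeries.C c * PowerSeries.X ^ a) := by
  rw [Derivation.leibniz, Derivation.leibniz_pow, PowerSeries.derivative_C,
    PowerSeries.derivative_X]
  cases a with
  | zero => simp
  | succ a =>
      simp only [smul_eq_mul, nsmul_eq_mul, smul_zero, add_zero, Nat.add_sub_cancel, mul_one]
      push_cast
      ring


lemma prod_neg' {S : Type*} [CommRing S] {ι : Type*} (t : Finset ι) (f : ι → S) :
    ∏ i ∈ t, -f i = (-1) ^ t.card * ∏ i ∈ t, f i := by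
  rw [← Finset.prod_const (-1 : S), ← Finset.prod_mul_distrib]
  simp

lemma expand (B : PowerSeries (R m)) :
    ∏ i : Fin m, (1 - PowerSeries.C (MvPolynomial.X i) * PowerSeries.X * B)
      = ∑ t ∈ (univ : Finset (Fin m)).powerset,
          PowerSeries.C ((-1) ^ t.card * ∏ i ∈ t, MvPolynomial.X i)
            * PowerSeries.X ^ t.card * B ^ t.card := by
  have h : ∀ i : Fin m, 1 - PowerSeries.C (MvPolynomial.X i) * PowerSeries.X * B
      = (-(PowerSeries.C (MvPolynomial.X i) * PowerSeries.X * B)) + 1 := fun i => by ring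
  simp only [h]
  rw [Finset.prod_add]
  refine Finset.sum_congr rfl fun t _ => ?_
  rw [Finset.prod_const_one, mul_one, prod_neg', Finset.prod_mul_distrib,
    Finset.prod_mul_distrib, Finset.prod_const, Finset.prod_const,
    map_mul, map_pow, map_neg, map_one, map_prod]
  ring

lemma coeff_helper (c : R m) (a r : ℕ) (F : PowerSeries (R m)) :
    PowerSeries.coeff r (PowerSeries.C c * PowerSeries.X ^ a * F)
      = c * (if a ≤ r then PowerSeries.coeff (r - a) F else 0) := by
  rw [mul_assoc, coeff_C_mul, coeff_X_pow_mul']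

lemma coeff_Psi (n r : ℕ) :
    PowerSeries.coeff r (Psi m n)
      = ∑ j ∈ Finset.Nat.antidiagonalTuple m r,
          ∏ i : Fin m, ((n + j i).choose (j i) : R m) * MvPolynomial.X i ^ (j i) := by
  rw [Psi, PowerSeries.coeff_prod]
  refine Finset.sum_nbij' (fun l => (l : Fin m → ℕ))
    (fun x => Finsupp.equivFunOnFinite.symm x) ?_ ?_ ?_ ?_ ?_
  · intro l hl
    rw [Finset.mem_finsuppAntidiag] at hl
    rw [Finset.Nat.mem_antidiagonalTuple]
    exact hl.1
  · intro x hx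
    rw [Finset.Nat.mem_antidiagonalTuple] at hx
    rw [Finset.mem_finsuppAntidiag]
    refine ⟨?_, Finset.subset_univ _⟩
    simpa using hx
  · intro l _; exact Finsupp.equivFunOnFinite.symm_apply_apply l
  · intro x _; exact Finsupp.equivFunOnFinite.apply_symm_apply x
  · intro l _
    exact Finset.prod_congr rfl fun i _ => by rw [g, coeff_mk]

noncomputable def cf (t : Finset (Fin m)) : R m :=
  (-1) ^ t.card * ∏ i ∈ t, MvPolynomial.X i

noncomputable def sGf (G : PowerSeries (R m)) (k r : ℕ) (t : Finset (Fin m)) : R m :=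
  cf m t * (if t.card ≤ r then PowerSeries.coeff (r - t.card) (G ^ (k + 1 + t.card)) else 0)

noncomputable def sPf (N r : ℕ) (t : Finset (Fin m)) : R m :=
  cf m t * (if t.card ≤ r then PowerSeries.coeff (r - t.card) (Psi m N) else 0)

lemma cf_empty : cf m ∅ = 1 := by simp [cf]

lemma sGf_empty (G : PowerSeries (R m)) (k r : ℕ) :
    sGf m G k r ∅ = PowerSeries.coeff r (G ^ (k + 1)) := by
  simp [sGf, cf_empty]

lemma sPf_empty (N r : ℕ) : sPf m N r ∅ = PowerSeries.coeff r (Psi m N) := by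
  simp [sPf, cf_empty]

lemma expand' (B : PowerSeries (R m)) :
    ∏ i : Fin m, (1 - PowerSeries.C (MvPolynomial.X i) * PowerSeries.X * B)
      = ∑ t ∈ (univ : Finset (Fin m)).powerset,
          PowerSeries.C (cf m t) * PowerSeries.X ^ t.card * B ^ t.card := by
  simp only [cf]; exact expand m B

lemma Q_eq_sum : Q m = ∑ t ∈ (univ : Finset (Fin m)).powerset,
    PowerSeries.C (cf m t) * PowerSeries.X ^ t.card := by
  have h := expand' m 1
  simp only [mul_one, one_pow] at h
  simp only [Q]
  exact h

lemma constantCoeff_Psi (n : ℕ) : PowerSeries.constantCoeff (Psi m n) = 1 := by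
  simp only [Psi, map_prod]
  rw [Finset.prod_eq_one]
  intro i _
  simp [g, PowerSeries.constantCoeff_mk]

lemma coeff_G_expand (G : PowerSeries (R m))
    (hG : G * ∏ i : Fin m,
      (1 - PowerSeries.C (MvPolynomial.X i) * PowerSeries.X * G) = 1)
    (k r : ℕ) :
    PowerSeries.coeff r (G ^ k)
      = ∑ t ∈ (univ : Finset (Fin m)).powerset, sGf m G k r t := by
  have h1 : G ^ k = G ^ (k + 1) * ∏ i : Fin m,
      (1 - PowerSeries.C (MvPolynomial.X i) * PowerSeries.X * G) := by
    calc G ^ k = G ^ k * (G * ∏ i : Fin m,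
        (1 - PowerSeries.C (MvPolynomial.X i) * PowerSeries.X * G)) := by
          rw [hG, mul_one]
    _ = _ := by ring
  rw [h1, expand' m G, Finset.mul_sum, map_sum]
  refine Finset.sum_congr rfl fun t _ => ?_
  have h2 : G ^ (k + 1) * (PowerSeries.C (cf m t) * PowerSeries.X ^ t.card * G ^ t.card)
      = PowerSeries.C (cf m t) * PowerSeries.X ^ t.card * G ^ (k + 1 + t.card) := by
    rw [pow_add]; ring
  rw [h2, coeff_helper]
  simp only [sGf]

lemma coeff_Psi_expand (n r : ℕ) :
    PowerSeries.coeff r (Psi m n)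
      = ∑ t ∈ (univ : Finset (Fin m)).powerset, sPf m (n + 1) r t := by
  rw [← Q_mul_Psi_succ m n, Q_eq_sum, Finset.sum_mul, map_sum]
  refine Finset.sum_congr rfl fun t _ => ?_
  rw [coeff_helper]
  simp only [sPf]

lemma coeff_XdQ (n r : ℕ) (hr : 1 ≤ r) :
    ((n : R m) + 1) * ∑ t ∈ (univ : Finset (Fin m)).powerset,
        (t.card : R m) * sPf m (n + 1) r t
      = -((r : R m) * PowerSeries.coeff r (Psi m n)) := by
  obtain ⟨rr, rfl⟩ : ∃ rr, r = rr + 1 := ⟨r - 1, by omega⟩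
  have hXdQ : PowerSeries.X * PowerSeries.derivative (R m) (Q m)
      = ∑ t ∈ (univ : Finset (Fin m)).powerset,
          (t.card : PowerSeries (R m)) * (PowerSeries.C (cf m t) * PowerSeries.X ^ t.card) := by
    rw [Q_eq_sum, map_sum, Finset.mul_sum]
    exact Finset.sum_congr rfl fun t _ => X_mul_d_C_mul_X_pow m (cf m t) t.card
  have key : ∑ t ∈ (univ : Finset (Fin m)).powerset, (t.card : R m) * sPf m (n + 1) (rr + 1) t
      = PowerSeries.coeff (rr + 1)
          (PowerSeries.X * PowerSeries.derivative (R m) (Q m) * Psi m (n + 1)) := by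
    rw [hXdQ, Finset.sum_mul, map_sum]
    refine Finset.sum_congr rfl fun t _ => ?_
    have h2 : (t.card : PowerSeries (R m)) * (PowerSeries.C (cf m t) * PowerSeries.X ^ t.card)
          * Psi m (n + 1)
        = PowerSeries.C ((t.card : R m))
            * (PowerSeries.C (cf m t) * PowerSeries.X ^ t.card * Psi m (n + 1)) := by
      rw [map_natCast]; ring
    rw [h2, coeff_C_mul, coeff_helper]
    simp only [sPf]
  rw [key, mul_assoc PowerSeries.X, coeff_succ_X_mul]
  rw [show ((n : R m) + 1) * PowerSeries.coeff rr
        (PowerSeries.derivative (R m) (Q m) * Psi m (n + 1))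
      = PowerSeries.coeff rr (PowerSeries.C ((n : R m) + 1)
          * (PowerSeries.derivative (R m) (Q m) * Psi m (n + 1))) from (coeff_C_mul _ _ _).symm]
  have h5 : PowerSeries.C ((n : R m) + 1)
      * (PowerSeries.derivative (R m) (Q m) * Psi m (n + 1))
      = -(PowerSeries.derivative (R m) (Psi m n)) := by
    have hd := dPsi m n
    have hc : PowerSeries.C ((n : R m) + 1) = ((n : PowerSeries (R m)) + 1) := by
      rw [map_add, map_natCast, map_one]
    rw [hc, hd]; ring
  rw [h5, map_neg, PowerSeries.coeff_derivative]
  push_cast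
  ring

lemma main (G : PowerSeries (R m))
    (hG0 : PowerSeries.constantCoeff G = 1)
    (hG : G * ∏ i : Fin m,
      (1 - PowerSeries.C (MvPolynomial.X i) * PowerSeries.X * G) = 1)
    (n : ℕ) : ∀ r, r ≤ n →
    ((n : R m) + 1) * PowerSeries.coeff r (G ^ (n - r + 1))
      = (((n - r : ℕ) : R m) + 1) * PowerSeries.coeff r (Psi m n) := by
  induction n with
  | zero =>
    intro r hr
    obtain rfl : r = 0 := Nat.le_zero.mp hr
    simp [PowerSeries.coeff_zero_eq_constantCoeff, map_pow, hG0, constantCoeff_Psi]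
  | succ n ihn =>
    intro r
    induction r using Nat.strong_induction_on with
    | _ r ihr =>
    intro hr
    rcases Nat.eq_zero_or_pos r with rfl | hrpos
    · simp [PowerSeries.coeff_zero_eq_constantCoeff, map_pow, hG0, constantCoeff_Psi]
    · set k := n + 1 - r with hk
      have hrk : k + r = n + 1 := by omega
      have hmem : (∅ : Finset (Fin m)) ∈ (univ : Finset (Fin m)).powerset :=
        Finset.empty_mem_powerset _
      have hA := coeff_G_expand m G hG k r
      have hsplitG := (Finset.add_sum_erase _ (fun t => sGf m G k r t) hmem).symm
      have hemp := sGf_empty m G k r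
      have hB : ∀ t ∈ ((univ : Finset (Fin m)).powerset).erase ∅,
          ((n : R m) + 2) * sGf m G k r t
            = ((k : R m) + 1 + (t.card : R m)) * sPf m (n + 1) r t := by
        intro t ht
        have htne : t ≠ ∅ := (Finset.mem_erase.mp ht).1
        have hcard : 1 ≤ t.card :=
          Finset.card_pos.mpr (Finset.nonempty_iff_ne_empty.mpr htne)
        simp only [sGf, sPf]
        by_cases hle : t.card ≤ r
        · rw [if_pos hle, if_pos hle]
          have H := ihr (r - t.card) (by omega) (by omega)
          have e1 : n + 1 - (r - t.card) + 1 = k + 1 + t.card := by omega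
          have e2 : ((n + 1 - (r - t.card) : ℕ) : R m) + 1
              = (k : R m) + 1 + (t.card : R m) := by
            have e2' : n + 1 - (r - t.card) = k + t.card := by omega
            rw [e2']; push_cast; ring
          rw [e1, e2] at H
          push_cast at H ⊢
          linear_combination (cf m t) * H
        · rw [if_neg hle, if_neg hle]
          simp
      have hBsum : ((n : R m) + 2) * ∑ t ∈ ((univ : Finset (Fin m)).powerset).erase ∅,
            sGf m G k r t
          = ∑ t ∈ ((univ : Finset (Fin m)).powerset).erase ∅,
              ((k : R m) + 1 + (t.card : R m)) * sPf m (n + 1) r t := by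
        rw [Finset.mul_sum]
        exact Finset.sum_congr rfl hB
      have hsplitU := (Finset.add_sum_erase _
        (fun t => ((k : R m) + 1 + (t.card : R m)) * sPf m (n + 1) r t) hmem).symm
      have hu0 : ((k : R m) + 1 + (((∅ : Finset (Fin m)).card : R m)))
            * sPf m (n + 1) r ∅
          = ((k : R m) + 1) * PowerSeries.coeff r (Psi m (n + 1)) := by
        rw [sPf_empty]; simp
      have hs1 : ∑ t ∈ (univ : Finset (Fin m)).powerset,
            ((k : R m) + 1 + (t.card : R m)) * sPf m (n + 1) r t
          = ((k : R m) + 1) * (∑ t ∈ (univ : Finset (Fin m)).powerset, sPf m (n + 1) r t)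
            + ∑ t ∈ (univ : Finset (Fin m)).powerset, (t.card : R m) * sPf m (n + 1) r t := by
        rw [Finset.mul_sum, ← Finset.sum_add_distrib]
        exact Finset.sum_congr rfl fun t _ => by ring
      have hC1 := coeff_Psi_expand m n r
      have hC2 := coeff_XdQ m n r hrpos
      have hD : ((n : R m) + 1) * PowerSeries.coeff r (G ^ k)
          = (k : R m) * PowerSeries.coeff r (Psi m n) := by
        rcases Nat.eq_zero_or_pos k with hk0 | hkpos
        · rw [hk0, pow_zero]
          simp [PowerSeries.coeff_one, hrpos.ne']
        · have H := ihn r (by omega)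
          have e1 : n - r + 1 = k := by omega
          have e2 : ((n - r : ℕ) : R m) + 1 = (k : R m) := by
            rw [← e1]; push_cast; ring
          rw [e1, e2] at H
          exact H
      have hcast : (k : R m) + (r : R m) = (n : R m) + 1 := by
        have h2 : ((k + r : ℕ) : R m) = ((n + 1 : ℕ) : R m) := by rw [hrk]
        push_cast at h2
        exact h2
      have hne : ((n : R m) + 1) ≠ 0 := Nat.cast_add_one_ne_zero n
      push_cast
      apply mul_left_cancel₀ hne
      linear_combination (-(((n : R m) + 1) * ((n : R m) + 2))) * hA
        + (-(((n : R m) + 1) * ((n : R m) + 2))) * hsplitG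
        + (-(((n : R m) + 1) * ((n : R m) + 2))) * hemp
        + ((n : R m) + 2) * hD
        + (-((n : R m) + 1)) * hBsum
        + ((n : R m) + 1) * hsplitU
        + ((n : R m) + 1) * hu0
        + (-((n : R m) + 1)) * hs1
        - hC2
        + (((n : R m) + 1) * ((k : R m) + 1)) * hC1
        + (PowerSeries.coeff r (Psi m n)) * hcast

end Stmt4Aux

/-- If `G` is the formal power series with constant term `1` satisfying
`G = ∏_{i=0}^{m-1} (1 - x_i t G)⁻¹` (equivalently `G · ∏_i (1 - x_i t G) = 1`),
then for `n ≥ k ≥ 0` the coefficient of `t^{n-k}` in `G^{k+1}` equals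
`((k+1)/(n+1)) Σ_{j_0+⋯+j_{m-1} = n-k} ∏_i binom(n+j_i, j_i) x_i^{j_i}`. -/
theorem stmt_4 (m : ℕ) (hm : 1 ≤ m)
    (G : PowerSeries (MvPolynomial (Fin m) ℚ))
    (hG0 : PowerSeries.constantCoeff G = 1)
    (hG : G * ∏ i : Fin m,
      (1 - PowerSeries.C (MvPolynomial.X i)
            * PowerSeries.X * G) = 1)
    (n k : ℕ) (hk : k ≤ n) :
    PowerSeries.coeff (n - k) (G ^ (k + 1))
      = MvPolynomial.C (((k : ℚ) + 1) / ((n : ℚ) + 1))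
        * ∑ j ∈ Finset.Nat.antidiagonalTuple m (n - k),
            ∏ i : Fin m,
              ((n + j i).choose (j i) : MvPolynomial (Fin m) ℚ)
                * MvPolynomial.X i ^ (j i) := by
  have hmain := Stmt4Aux.main m G hG0 hG n (n - k) (by omega)
  rw [show n - (n - k) = k from by omega] at hmain
  rw [Stmt4Aux.coeff_Psi m n (n - k)] at hmain
  have hne : ((n : MvPolynomial (Fin m) ℚ) + 1) ≠ 0 := Nat.cast_add_one_ne_zero n
  apply mul_left_cancel₀ hne
  rw [hmain, ← mul_assoc]
  congr 1
  have h1 : ((n : MvPolynomial (Fin m) ℚ) + 1) = MvPolynomial.C ((n : ℚ) + 1) := by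
    rw [map_add, map_natCast, map_one]
  rw [h1, ← map_mul]
  have h2 : ((n : ℚ) + 1) * (((k : ℚ) + 1) / ((n : ℚ) + 1)) = (k : ℚ) + 1 := by
    field_simp
  rw [h2, map_add, map_natCast, map_one]
end

section
/- For integers 1 ≤ p and n ≥ 1 and 0 ≤ j ≤ n, one has (1/n)·Σ_{i=0}^{j} binom(pn, n-i-1)·binom(n, i)·binom(n-i, n-j) = (1/((p-1)n+j+1))·binom(pn+j, n)·binom(n, j). -/
open Finset

-- trinomial revision: C(n,i)*C(n-i,n-j) = C(n,j)*C(j,i) for i ≤ j ≤ n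
lemma tri_rev {n j i : ℕ} (hij : i ≤ j) (hj : j ≤ n) :
    n.choose i * (n - i).choose (n - j) = n.choose j * j.choose i := by
  rw [Nat.choose_mul (n := n) hij]
  congr 1
  rw [← Nat.choose_symm (by omega : j - i ≤ n - i)]
  congr 1
  omega

-- Vandermonde in range form
lemma vdm (m j n : ℕ) (hn : 1 ≤ n) :
    (m + j).choose (n - 1) = ∑ i ∈ range n, m.choose (n - 1 - i) * j.choose i := by
  rw [Nat.add_choose_eq, Finset.Nat.sum_antidiagonal_eq_sum_range_succ_mk]
  simp only [Nat.succ_eq_add_one]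
  have hn1 : n - 1 + 1 = n := by omega
  rw [hn1, ← Finset.sum_range_reflect]
  refine Finset.sum_congr rfl fun i hi => ?_
  have hi' : i < n := Finset.mem_range.mp hi
  congr 2 <;> omega

lemma sum_key (m n j : ℕ) (hn : 1 ≤ n) (hj : j ≤ n) :
    ∑ i ∈ range (j + 1),
        (if i < n then m.choose (n - i - 1) else 0) * n.choose i * (n - i).choose (n - j)
      = n.choose j * (m + j).choose (n - 1) := by
  rw [vdm m j n hn, Finset.mul_sum]
  -- turn LHS into a sum over range n
  have step1 : ∀ i ∈ range (j + 1),
      (if i < n then m.choose (n - i - 1) else 0) * n.choose i * (n - i).choose (n - j)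
      = (if i < n then n.choose j * (m.choose (n - 1 - i) * j.choose i) else 0) := by
    intro i hi
    have hij : i ≤ j := Nat.lt_succ_iff.mp (Finset.mem_range.mp hi)
    by_cases h : i < n
    · simp only [h, if_true]
      rw [mul_assoc, tri_rev hij hj]
      have : n - i - 1 = n - 1 - i := by omega
      rw [this]; ring
    · simp [h]
  rw [Finset.sum_congr rfl step1]
  rcases eq_or_lt_of_le hj with rfl | hjn
  · -- j = n : sum over range (n+1), last term killed by if
    rw [Finset.sum_range_succ]
    simp only [lt_irrefl, if_false, add_zero]
    refine Finset.sum_congr rfl fun i hi => ?_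
    simp [Finset.mem_range.mp hi]
  · -- j < n : range (j+1) ⊆ range n, extend with zeros
    rw [show (range n) = range (j+1) ∪ (range n \ range (j+1)) by
      rw [Finset.union_sdiff_of_subset]; exact Finset.range_subset_range.mpr (by omega)]
    rw [Finset.sum_union (Finset.disjoint_sdiff)]
    have h1 : ∀ i ∈ range (j+1),
        (if i < n then n.choose j * (m.choose (n - 1 - i) * j.choose i) else 0)
        = n.choose j * (m.choose (n - 1 - i) * j.choose i) := by
      intro i hi
      have : i < n := by have := Finset.mem_range.mp hi; omega
      simp [this]
    have h2 : ∀ i ∈ range n \ range (j+1),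
        n.choose j * (m.choose (n - 1 - i) * j.choose i) = 0 := by
      intro i hi
      simp only [Finset.mem_sdiff, Finset.mem_range] at hi
      rw [Nat.choose_eq_zero_of_lt (show j < i by omega)]
      ring
    rw [Finset.sum_congr rfl h1, Finset.sum_congr rfl h2]
    simp

/-- The identity `(1/n) Σ_{i=0}^{j} binom(pn, n-i-1) binom(n, i) binom(n-i, n-j)
  = (1/((p-1)n+j+1)) binom(pn+j, n) binom(n, j)`,
with the convention that `binom(pn, n-i-1) = 0` when `n-i-1 < 0` (i.e. `i ≥ n`). -/
theorem stmt_8 (p n j : ℕ) (hp : 1 ≤ p) (hn : 1 ≤ n) (hj : j ≤ n) :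
    (1 / (n : ℚ)) * ∑ i ∈ Finset.range (j + 1),
        (if i < n then ((p * n).choose (n - i - 1) : ℚ) else 0)
          * (n.choose i : ℚ) * ((n - i).choose (n - j) : ℚ)
      = (1 / (((p - 1) * n + j + 1 : ℕ) : ℚ)) * ((p * n + j).choose n : ℚ)
          * (n.choose j : ℚ) := by
  have hsum : (∑ i ∈ Finset.range (j + 1),
        (if i < n then ((p * n).choose (n - i - 1) : ℚ) else 0)
          * (n.choose i : ℚ) * ((n - i).choose (n - j) : ℚ))
      = ((n.choose j * (p * n + j).choose (n - 1) : ℕ) : ℚ) := by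
    rw [← sum_key (p * n) n j hn hj]
    push_cast
    refine Finset.sum_congr rfl fun i hi => ?_
    split <;> simp
  rw [hsum]
  -- key nat identity
  have hle : n ≤ p * n := Nat.le_mul_of_pos_left n hp
  have hD : (p - 1) * n + j + 1 = p * n + j - (n - 1) := by
    have : (p - 1) * n = p * n - n := by
      rw [Nat.sub_mul, one_mul]
    omega
  have hkey : (p * n + j).choose n * n = (p * n + j).choose (n - 1) * ((p - 1) * n + j + 1) := by
    have := Nat.choose_succ_right_eq (p * n + j) (n - 1)
    rw [show n - 1 + 1 = n by omega] at this
    rw [this, hD]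
  have hn0 : (n : ℚ) ≠ 0 := by positivity
  have hD0 : (((p - 1) * n + j + 1 : ℕ) : ℚ) ≠ 0 := by positivity
  have natkey : n.choose j * (p * n + j).choose (n - 1) * ((p - 1) * n + j + 1)
      = (p * n + j).choose n * n.choose j * n := by
    calc n.choose j * (p * n + j).choose (n - 1) * ((p - 1) * n + j + 1)
        = n.choose j * ((p * n + j).choose (n - 1) * ((p - 1) * n + j + 1)) := by ring
      _ = n.choose j * ((p * n + j).choose n * n) := by rw [← hkey]
      _ = (p * n + j).choose n * n.choose j * n := by ring
  have e1 : (1 / (n : ℚ)) * ((n.choose j * (p * n + j).choose (n - 1) : ℕ) : ℚ)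
      = ((n.choose j * (p * n + j).choose (n - 1) : ℕ) : ℚ) / n := by ring
  have e2 : (1 / (((p - 1) * n + j + 1 : ℕ) : ℚ)) * ((p * n + j).choose n : ℚ) * (n.choose j : ℚ)
      = (((p * n + j).choose n : ℚ) * (n.choose j : ℚ)) / (((p - 1) * n + j + 1 : ℕ) : ℚ) := by
    ring
  rw [e1, e2, div_eq_div_iff hn0 hD0]
  exact_mod_cast natkey
end

section
/- The number of Stirling permutations of the multiset {1^{r_1}, 2^{r_2}, ..., n^{r_n}} equals (r_1+1)(r_1+r_2+1)⋯(r_1+...+r_{n-1}+1). In particular, the number of r-Stirling permutations of order n (i.e., of the multiset with each of 1,...,n appearing r times) equals the multifactorial F_n^{(r)} = ∏_{j=0}^{n-1}(1+jr). -/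
def IsStirlingWord (w : List ℕ) : Prop :=
  ∀ i j k : Fin w.length, i < j → j < k → w.get i = w.get k → w.get i ≤ w.get j

/-- `w` contains the pattern a..b..a with b < a. -/
def HasPat (w : List ℕ) : Prop := ∃ a b : ℕ, b < a ∧ [a, b, a].Sublist w

lemma isStirling_iff_not_hasPat (w : List ℕ) : IsStirlingWord w ↔ ¬ HasPat w := by
  constructor
  · rintro hst ⟨a, b, hba, hsub⟩
    rw [List.sublist_iff_exists_fin_orderEmbedding_get_eq] at hsub
    obtain ⟨f, hf⟩ := hsub
    set i0 : Fin ([a,b,a].length) := ⟨0, by norm_num⟩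
    set i1 : Fin ([a,b,a].length) := ⟨1, by norm_num⟩
    set i2 : Fin ([a,b,a].length) := ⟨2, by norm_num⟩
    have h01 : f i0 < f i1 := f.strictMono (Fin.mk_lt_mk.mpr one_pos)
    have h12 : f i1 < f i2 := f.strictMono (Fin.mk_lt_mk.mpr one_lt_two)
    have e0 := hf i0
    have e1 := hf i1
    have e2 := hf i2
    simp only [i0, i1, i2, List.get] at e0 e1 e2
    have := hst (f i0) (f i1) (f i2) h01 h12 (by rw [← e0, ← e2])
    rw [← e0, ← e1] at this
    omega
  · intro h i j k hij hjk heq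
    by_contra hlt
    push_neg at hlt
    refine h ⟨w.get i, w.get j, hlt, ?_⟩
    rw [List.sublist_iff_exists_fin_orderEmbedding_get_eq]
    have hmono : StrictMono (fun x : Fin ([w.get i, w.get j, w.get i].length) =>
        (![i, j, k] x : Fin w.length)) := by
      intro a b hab
      fin_cases a <;> fin_cases b <;>
        simp_all [Matrix.cons_val_zero, Matrix.cons_val_one] <;>
        first | exact hij | exact hjk | exact hij.trans hjk | exact absurd hab (by omega)
    refine ⟨OrderEmbedding.ofStrictMono _ hmono, ?_⟩
    intro ix
    have heq2 : w[(i:ℕ)] = w[(k:ℕ)] := heq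
    fin_cases ix <;> simp [List.get, heq2]

lemma hasPat_mono {u w : List ℕ} (h : u.Sublist w) (hp : HasPat u) : HasPat w := by
  obtain ⟨a, b, hba, hs⟩ := hp
  exact ⟨a, b, hba, hs.trans h⟩

/-- In a Stirling word where `m` is the max letter, the `m`'s form a contiguous block. -/
lemma exists_decomp {w : List ℕ} {m c : ℕ} (hc : 1 ≤ c) (hcount : w.count m = c)
    (hmax : ∀ a ∈ w, a ≤ m) (hst : ¬ HasPat w) :
    ∃ x y : List ℕ, w = x ++ List.replicate c m ++ y ∧ m ∉ x ∧ m ∉ y := by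
  set x := w.takeWhile (fun a => a ≠ m) with hx
  set z := w.dropWhile (fun a => a ≠ m) with hz
  have hw : w = x ++ z := (List.takeWhile_append_dropWhile ..).symm
  have hmx : m ∉ x := by
    intro hm
    have := List.mem_takeWhile_imp hm
    simp at this
  set u := z.takeWhile (fun a => a = m) with hu
  set y := z.dropWhile (fun a => a = m) with hy2
  have hzuy : z = u ++ y := (List.takeWhile_append_dropWhile ..).symm
  have hum : ∀ a ∈ u, a = m := by
    intro a ha
    have := List.mem_takeWhile_imp ha
    simpa using this
  -- m ∈ z
  have hmw : m ∈ w := List.count_pos_iff.mp (by omega)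
  have hmz : m ∈ z := by
    rcases List.mem_append.mp (hw ▸ hmw) with h | h
    · exact absurd h hmx
    · exact h
  -- z begins with m
  obtain ⟨z0, zt, hzc⟩ := List.exists_cons_of_ne_nil (List.ne_nil_of_mem hmz)
  have hz0 : z0 = m := by
    have := List.head_dropWhile_not (fun a => a ≠ m) (l := w)
    rw [← hz, hzc] at this
    by_contra hne
    have h := this (by simp [hzc])
    simp [hne] at h
  -- u nonempty
  have hune : u ≠ [] := by
    rw [hu, hzc]
    simp [hz0, List.takeWhile_cons]
  have hmy : m ∉ y := by
    intro hmy
    obtain ⟨y0, yt, hyc⟩ := List.exists_cons_of_ne_nil (List.ne_nil_of_mem hmy)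
    have hy0 : y0 ≠ m := by
      have := List.head_dropWhile_not (fun a => a = m) (l := z)
      rw [← hy2, hyc] at this
      intro hyes
      have h := this (by simp [hyc])
      simp [hyes] at h
    have hmyt : m ∈ yt := by
      rcases List.mem_cons.mp (hyc ▸ hmy) with h | h
      · exact absurd h.symm hy0
      · exact h
    -- pattern [m, y0, m]
    refine hst ⟨m, y0, lt_of_le_of_ne (hmax y0 (by rw [hw, hzuy, hyc]; simp)) hy0, ?_⟩
    have h1 : [y0, m].Sublist (y0 :: yt) :=
      List.cons_sublist_cons.mpr (List.singleton_sublist.mpr hmyt)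
    have h2 : [m, y0, m].Sublist (u ++ y0 :: yt) := by
      obtain ⟨u0, ut, huc⟩ := List.exists_cons_of_ne_nil hune
      have hu0 : u0 = m := hum u0 (by simp [huc])
      rw [huc, hu0]
      exact List.cons_sublist_cons.mpr (h1.trans (List.sublist_append_right ut _))
    rw [hw, hzuy, hyc]
    exact h2.trans (List.sublist_append_right x _)
  -- u is the replicate
  have hurep : u = List.replicate u.length m := List.eq_replicate_of_mem hum
  have hulen : u.length = c := by
    have : w.count m = x.count m + (u.count m + y.count m) := by
      rw [hw, hzuy]; simp [List.count_append]
    rw [hcount, List.count_eq_zero.mpr hmx, List.count_eq_zero.mpr hmy, hurep,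
      List.count_replicate] at this
    simpa using this.symm
  exact ⟨x, y, by rw [hw, hzuy, ← hulen, ← hurep, List.append_assoc], hmx, hmy⟩

/-- Inserting a block of a strictly larger letter preserves the Stirling property. -/
lemma ins_not_hasPat {v : List ℕ} {m c k : ℕ} (hv : ∀ a ∈ v, a < m)
    (hst : ¬ HasPat v) : ¬ HasPat (v.take k ++ List.replicate c m ++ v.drop k) := by
  rintro ⟨a, b, hba, hsub⟩
  rw [List.append_assoc, List.sublist_append_iff] at hsub
  obtain ⟨p1, q, hpq, hp1, hq⟩ := hsub
  rw [List.sublist_append_iff] at hq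
  obtain ⟨p2, p3, hq23, hp2, hp3⟩ := hq
  obtain ⟨j, hj, hp2rep⟩ := List.sublist_replicate_iff.mp hp2
  have hp1mem : ∀ x ∈ p1, x < m := fun x hx => hv x (List.mem_of_mem_take (hp1.mem hx))
  have hp3mem : ∀ x ∈ p3, x < m := fun x hx => hv x (List.mem_of_mem_drop (hp3.mem hx))
  have hpat : [a, b, a] = p1 ++ p2 ++ p3 := by rw [hpq, hq23, List.append_assoc]
  by_cases ham : a = m
  · -- p1 and p3 contain no m, so both a's are in p2, hence b ∈ p2, b = m, contra
    have hp1ne : p1 = [] := by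
      cases p1 with
      | nil => rfl
      | cons x xs =>
        exfalso
        have hxa : x = a := by
          have := congrArg (fun l => l.head?) hpat
          simpa using this.symm
        have hxm : x < m := hp1mem x (by simp)
        omega
    have hp3ne : p3 = [] := by
      cases hp3e : p3 with
      | nil => rfl
      | cons x xs =>
        exfalso
        have hlast : p3.getLast? = some a := by
          have := congrArg (fun l => l.getLast?) hpat
          simp only [List.getLast?_append] at this
          rw [hp3e] at this ⊢
          simpa using this.symm
        have ham' : a ∈ p3 := List.mem_of_mem_getLast? (by rw [hlast]; rfl)
        have := hp3mem a ham'
        omega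
    rw [hp1ne, hp3ne, List.nil_append, List.append_nil] at hpat
    have hbp2 : b ∈ p2 := by rw [← hpat]; simp
    have : b = m := List.eq_of_mem_replicate (hp2rep ▸ hbp2)
    omega
  · -- a ≠ m; then also b ≠ m, so p2 = [] and the pattern is in v
    have hbm : b ≠ m := by
      intro hbm
      -- a occurs in p1 or p3 (a ≠ m so not in p2), hence a < m = b < a, contra
      have hamem : a ∈ p1 ++ p2 ++ p3 := by rw [← hpat]; simp
      have : a < m := by
        rcases List.mem_append.mp hamem with h | h3
        · rcases List.mem_append.mp h with h1 | h2
          · exact hp1mem a h1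
          · exact absurd (by
              have := hp2rep ▸ h2
              simpa using List.eq_of_mem_replicate this) ham
        · exact hp3mem a h3
      omega
    have hp2ne : p2 = [] := by
      cases hp2e : p2 with
      | nil => rfl
      | cons x xs =>
        exfalso
        have hxm : x = m := by
          have : x ∈ List.replicate j m := by rw [← hp2rep, hp2e]; simp
          exact List.eq_of_mem_replicate this
        have hxmem : x ∈ [a, b, a] := by rw [hpat, hp2e]; simp
        rcases List.mem_cons.mp hxmem with h | h
        · exact ham (hxm ▸ h.symm)
        · rcases List.mem_cons.mp h with h' | h'
          · exact hbm (hxm ▸ h'.symm)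
          · exact ham (hxm ▸ (List.mem_singleton.mp h').symm)
    refine hst ⟨a, b, hba, ?_⟩
    have : [a, b, a].Sublist (v.take k ++ v.drop k) := by
      rw [hpat, hp2ne, List.append_nil]
      exact List.Sublist.append hp1 hp3
    rwa [List.take_append_drop] at this

lemma length_of_counts {v : List ℕ} {n : ℕ} {r : ℕ → ℕ}
    (h : ∀ i, v.count i = if i < n then r i else 0) :
    v.length = ∑ i ∈ Finset.range n, r i := by
  have hmem : ∀ a ∈ v, a < n := by
    intro a ha
    by_contra hn
    have := h a
    rw [if_neg hn] at this
    exact absurd this (by simpa [List.count_eq_zero] using ha)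
  have h1 : ∑ a ∈ v.toFinset, v.count a = v.length := by
    have := Multiset.toFinset_sum_count_eq (v : Multiset ℕ)
    simpa using this
  have h2 : ∑ a ∈ Finset.range n, v.count a = ∑ a ∈ v.toFinset, v.count a := by
    refine (Finset.sum_subset ?_ ?_).symm
    · intro a ha
      exact Finset.mem_range.mpr (hmem a (List.mem_toFinset.mp ha))
    · intro a _ ha
      exact List.count_eq_zero.mpr (fun hc => ha (List.mem_toFinset.mpr hc))
  rw [← h1, ← h2]
  refine Finset.sum_congr rfl fun i hi => ?_
  rw [h i, if_pos (Finset.mem_range.mp hi)]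

lemma takeWhile_decomp {x y : List ℕ} {m c : ℕ} (hc : 1 ≤ c) (hx : m ∉ x) :
    ((x ++ (List.replicate c m ++ y)).takeWhile (fun a => a ≠ m)) = x := by
  induction x with
  | nil =>
    obtain ⟨c', rfl⟩ : ∃ c', c = c' + 1 := ⟨c - 1, by omega⟩
    simp [List.replicate_succ, List.takeWhile_cons]
  | cons x0 xs ih =>
    have hx0 : x0 ≠ m := fun h => hx (by simp [h])
    have hxs : m ∉ xs := fun h => hx (by simp [h])
    have := ih hxs
    simp_all [List.takeWhile_cons]

lemma filter_decomp {x y : List ℕ} {m c : ℕ} (hx : m ∉ x) (hy : m ∉ y) :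
    ((x ++ (List.replicate c m ++ y)).filter (fun a => a ≠ m)) = x ++ y := by
  have h1 : (x.filter (fun a => a ≠ m)) = x :=
    List.filter_eq_self.mpr (fun a ha => by
      simp only [ne_eq, decide_eq_true_eq]
      exact fun h => hx (h ▸ ha))
  have h2 : (y.filter (fun a => a ≠ m)) = y :=
    List.filter_eq_self.mpr (fun a ha => by
      simp only [ne_eq, decide_eq_true_eq]
      exact fun h => hy (h ▸ ha))
  have h3 : ((List.replicate c m).filter (fun a => a ≠ m)) = [] := by simp
  rw [List.filter_append, List.filter_append, h1, h2, h3, List.nil_append]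

lemma count_ins (v : List ℕ) (m c k i : ℕ) :
    ((v.take k ++ (List.replicate c m ++ v.drop k)).count i)
      = (if i = m then c else 0) + v.count i := by
  conv_rhs => rw [← List.take_append_drop k v]
  rw [List.count_append, List.count_append, List.count_append, List.count_replicate]
  by_cases h : i = m
  · subst h; simp; omega
  · rw [if_neg h, if_neg (by simp only [beq_iff_eq]; exact fun hh => h hh.symm)]
    omega

lemma card_step (n : ℕ) (r : ℕ → ℕ) (hrn : 1 ≤ r n) :
    Nat.card {w : List ℕ // (∀ i, w.count i = if i < n + 1 then r i else 0) ∧ IsStirlingWord w}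
      = ((∑ i ∈ Finset.range n, r i) + 1) *
        Nat.card {w : List ℕ // (∀ i, w.count i = if i < n then r i else 0) ∧ IsStirlingWord w} := by
  set L := ∑ i ∈ Finset.range n, r i with hL
  have key : ∀ w : List ℕ, (∀ i, w.count i = if i < n + 1 then r i else 0) → IsStirlingWord w →
      ∃ x y, w = x ++ List.replicate (r n) n ++ y ∧ n ∉ x ∧ n ∉ y := by
    intro w hcnt hst
    refine exists_decomp hrn ?_ ?_ ((isStirling_iff_not_hasPat w).mp hst)
    · rw [hcnt n, if_pos (by omega)]
    · intro a ha
      by_contra h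
      have := hcnt a
      rw [if_neg (by omega)] at this
      exact absurd this (by simpa [List.count_eq_zero] using ha)
  have memF : ∀ w : List ℕ, (∀ i, w.count i = if i < n + 1 then r i else 0) → IsStirlingWord w →
      (∀ i, (w.filter (fun a => a ≠ n)).count i = if i < n then r i else 0)
        ∧ IsStirlingWord (w.filter (fun a => a ≠ n)) := by
    intro w hcnt hst
    constructor
    · intro i
      by_cases hin : i = n
      · subst hin
        rw [List.count_eq_zero.mpr (fun hmem => by simpa using (List.mem_filter.mp hmem).2)]
        rw [if_neg (by omega)]
      · rw [List.count_filter (by simpa using hin), hcnt i]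
        by_cases h : i < n
        · rw [if_pos h, if_pos (by omega)]
        · rw [if_neg h, if_neg (by omega)]
    · rw [isStirling_iff_not_hasPat] at hst ⊢
      exact fun hp => hst (hasPat_mono List.filter_sublist hp)
  have memI : ∀ (v : List ℕ) (k : ℕ), (∀ i, v.count i = if i < n then r i else 0) →
      IsStirlingWord v →
      (∀ i, ((v.take k ++ List.replicate (r n) n ++ v.drop k).count i
          = if i < n + 1 then r i else 0))
        ∧ IsStirlingWord (v.take k ++ List.replicate (r n) n ++ v.drop k) := by
    intro v k hcnt hst
    have hvlt : ∀ a ∈ v, a < n := by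
      intro a ha
      by_contra h
      have := hcnt a
      rw [if_neg (by omega)] at this
      exact absurd this (by simpa [List.count_eq_zero] using ha)
    constructor
    · intro i
      rw [List.append_assoc, count_ins]
      by_cases hin : i = n
      · rw [hin, if_pos rfl, hcnt n, if_neg (lt_irrefl n), if_pos (Nat.lt_succ_self n)]
        omega
      · rw [if_neg hin, hcnt i]
        by_cases h : i < n
        · rw [if_pos h, if_pos (by omega)]
          omega
        · rw [if_neg h, if_neg (by omega)]
    · rw [isStirling_iff_not_hasPat]
      rw [isStirling_iff_not_hasPat] at hst
      exact ins_not_hasPat (m := n) (c := r n) (k := k) hvlt hst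
  have e : {w : List ℕ // (∀ i, w.count i = if i < n + 1 then r i else 0) ∧ IsStirlingWord w} ≃
      Fin (L + 1) × {w : List ℕ // (∀ i, w.count i = if i < n then r i else 0) ∧ IsStirlingWord w} := by
    refine
      { toFun := fun w => (⟨(w.1.takeWhile (fun a => a ≠ n)).length, ?_⟩,
          ⟨w.1.filter (fun a => a ≠ n), memF w.1 w.2.1 w.2.2⟩),
        invFun := fun p => ⟨p.2.1.take p.1.1 ++ List.replicate (r n) n ++ p.2.1.drop p.1.1,
          memI p.2.1 p.1.1 p.2.2.1 p.2.2.2⟩,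
        left_inv := ?_, right_inv := ?_ }
    · -- bound on takeWhile length
      obtain ⟨x, y, hxy, hx, hy⟩ := key w.1 w.2.1 w.2.2
      have hTW : w.1.takeWhile (fun a => a ≠ n) = x := by
        rw [hxy, List.append_assoc]; exact takeWhile_decomp hrn hx
      have hF : w.1.filter (fun a => a ≠ n) = x ++ y := by
        rw [hxy, List.append_assoc]; exact filter_decomp hx hy
      have hlen : (w.1.filter (fun a => a ≠ n)).length = L :=
        length_of_counts (memF w.1 w.2.1 w.2.2).1
      rw [hTW]
      rw [hF, List.length_append] at hlen
      omega
    · -- left inverse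
      rintro ⟨w, hw⟩
      obtain ⟨x, y, hxy, hx, hy⟩ := key w hw.1 hw.2
      have hTW : w.takeWhile (fun a => a ≠ n) = x := by
        rw [hxy, List.append_assoc]; exact takeWhile_decomp hrn hx
      have hF : w.filter (fun a => a ≠ n) = x ++ y := by
        rw [hxy, List.append_assoc]; exact filter_decomp hx hy
      apply Subtype.ext
      simp only [hTW, hF]
      rw [List.take_left, List.drop_left, ← hxy]
    · -- right inverse
      rintro ⟨⟨k, hk⟩, ⟨v, hv⟩⟩
      have hvlt : ∀ a ∈ v, a < n := by
        intro a ha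
        by_contra h
        have := hv.1 a
        rw [if_neg (by omega)] at this
        exact absurd this (by simpa [List.count_eq_zero] using ha)
      have hvlen : v.length = L := length_of_counts hv.1
      have hkv : k ≤ v.length := by omega
      have hnt : n ∉ v.take k := fun h => absurd (hvlt n (List.mem_of_mem_take h)) (lt_irrefl n)
      have hnd : n ∉ v.drop k := fun h => absurd (hvlt n (List.mem_of_mem_drop h)) (lt_irrefl n)
      have hTW : ((v.take k ++ List.replicate (r n) n ++ v.drop k).takeWhile (fun a => a ≠ n))
          = v.take k := by
        rw [List.append_assoc]; exact takeWhile_decomp hrn hnt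
      have hF : ((v.take k ++ List.replicate (r n) n ++ v.drop k).filter (fun a => a ≠ n))
          = v := by
        rw [List.append_assoc, filter_decomp hnt hnd, List.take_append_drop]
      refine Prod.ext ?_ ?_
      · apply Fin.ext
        simp only [hTW, List.length_take]
        omega
      · apply Subtype.ext
        exact hF
  rw [Nat.card_congr e, Nat.card_prod, Nat.card_eq_fintype_card (α := Fin (L + 1)),
    Fintype.card_fin]

lemma card_zero (r : ℕ → ℕ) :
    Nat.card {w : List ℕ // (∀ i, w.count i = if i < 0 then r i else 0) ∧ IsStirlingWord w}
      = 1 := by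
  have hempty : ∀ w : List ℕ, (∀ i, w.count i = if i < 0 then r i else 0) → w = [] := by
    intro w h
    refine List.eq_nil_iff_forall_not_mem.mpr fun a ha => ?_
    have := h a
    simp only [Nat.not_lt_zero, if_false] at this
    exact absurd this (by simpa [List.count_eq_zero] using ha)
  rw [Nat.card_eq_one_iff_unique]
  constructor
  · refine ⟨fun a b => Subtype.ext ?_⟩
    rw [hempty a.1 a.2.1, hempty b.1 b.2.1]
  · refine ⟨⟨[], fun i => by simp, ?_⟩⟩
    intro i j k hij hjk heq
    exact absurd i.2 (by simp)

lemma card_formula (n : ℕ) (r : ℕ → ℕ) (hr : ∀ i < n, 1 ≤ r i) :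
    Nat.card {w : List ℕ // (∀ i, w.count i = if i < n then r i else 0) ∧ IsStirlingWord w}
      = ∏ j ∈ Finset.range (n - 1), ((∑ i ∈ Finset.range (j + 1), r i) + 1) := by
  induction n with
  | zero => simpa using card_zero r
  | succ m ih =>
    rw [card_step m r (hr m (Nat.lt_succ_self m)), ih (fun i hi => hr i (hi.trans (Nat.lt_succ_self m)))]
    cases m with
    | zero => simp
    | succ m' =>
      rw [Nat.succ_sub_one, Nat.succ_sub_one, Finset.prod_range_succ]
      ring

/-- The number of Stirling permutations of the multiset `{0^{r_0}, 1^{r_1}, …, (n-1)^{r_{n-1}}}`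
(each `r_i ≥ 1`) equals `(r_0+1)(r_0+r_1+1)⋯(r_0+⋯+r_{n-2}+1)`.  In particular, the number
of `c`-Stirling permutations of order `n` (each letter appearing exactly `c` times) equals
the multifactorial `F_n^{(c)} = ∏_{j=0}^{n-1} (1+jc)`. -/
theorem stmt_12 (n : ℕ) (r : ℕ → ℕ) (hr : ∀ i < n, 1 ≤ r i) :
    Nat.card {w : List ℕ //
        (∀ i : ℕ, w.count i = if i < n then r i else 0) ∧ IsStirlingWord w}
      = ∏ j ∈ Finset.range (n - 1), ((∑ i ∈ Finset.range (j + 1), r i) + 1)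
    ∧ ∀ c : ℕ, 1 ≤ c →
        Nat.card {w : List ℕ //
            (∀ i : ℕ, w.count i = if i < n then c else 0) ∧ IsStirlingWord w}
          = ∏ j ∈ Finset.range n, (1 + j * c) := by
  constructor
  · exact card_formula n r hr
  · intro c hc
    rw [card_formula n (fun _ => c) (fun i _ => hc)]
    cases n with
    | zero => simp
    | succ m =>
      rw [Nat.succ_sub_one, Finset.prod_range_succ']
      simp only [Finset.sum_const, Finset.card_range, smul_eq_mul]
      rw [Nat.zero_mul, Nat.add_zero, Nat.mul_one]
      refine Finset.prod_congr rfl fun j _ => ?_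
      ring
end

section
/- The r-th order Eulerian numbers ⟨n,k⟩^{(r)}, defined by the recurrence ⟨n,k⟩^{(r)} = (k+1)·⟨n-1,k⟩^{(r)} + (rn−(r−1)−k)·⟨n-1,k-1⟩^{(r)} for n ≥ 1 with ⟨0,k⟩^{(r)} = δ_{0k}, satisfy: (i) ⟨n,n-1⟩^{(r)} = F_n^{(r-1)} and (ii) Σ_{k=0}^{n} ⟨n,k⟩^{(r)} = F_n^{(r)}, where F_n^{(s)} = ∏_{j=0}^{n-1}(1+js). -/
/-- The `r`-th order Eulerian numbers `⟨n,k⟩^{(r)}`, defined by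
`⟨0,k⟩^{(r)} = δ_{0k}` and
`⟨n,k⟩^{(r)} = (k+1)⟨n-1,k⟩^{(r)} + (rn−(r−1)−k)⟨n-1,k-1⟩^{(r)}` for `n ≥ 1`
(with `⟨n-1,-1⟩^{(r)} = 0`). -/
def eulerianR (r : ℕ) : ℕ → ℕ → ℤ
  | 0, k => if k = 0 then 1 else 0
  | n + 1, k =>
      ((k : ℤ) + 1) * eulerianR r n k
        + ((r : ℤ) * ((n : ℤ) + 1) - ((r : ℤ) - 1) - (k : ℤ))
            * (if k = 0 then 0 else eulerianR r n (k - 1))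

lemma eulerianR_eq_zero (r : ℕ) : ∀ n k : ℕ, n ≤ k → 1 ≤ k → eulerianR r n k = 0 := by
  intro n
  induction n with
  | zero =>
    intro k _ hk1
    simp only [eulerianR]; rw [if_neg (by omega)]
  | succ n ih =>
    intro k hk hk1
    have hk0 : k ≠ 0 := by omega
    rw [eulerianR, if_neg hk0]
    rcases Nat.eq_or_lt_of_le (show 1 ≤ k from hk1) with h1 | h1
    · -- k = 1, so n = 0
      have hn : n = 0 := by omega
      subst hn
      have hk' : k = 1 := h1.symm
      subst hk'
      simp [eulerianR]
    · have h2 : 1 ≤ k - 1 := by omega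
      rw [ih k (by omega) hk1, ih (k - 1) (by omega) h2]
      ring

lemma eulerianR_diag (r : ℕ) : ∀ n : ℕ, 1 ≤ n →
    eulerianR r n (n - 1) = ∏ j ∈ Finset.range n, (1 + (j : ℤ) * ((r : ℤ) - 1)) := by
  intro n
  induction n with
  | zero => omega
  | succ n ih =>
    intro _
    simp only [Nat.add_sub_cancel]
    rw [eulerianR]
    rcases Nat.eq_zero_or_pos n with hn | hn
    · subst hn
      simp [eulerianR]
    · have h0 : eulerianR r n n = 0 := eulerianR_eq_zero r n n le_rfl hn
      rw [h0, if_neg (by omega : n ≠ 0), ih hn, Finset.prod_range_succ]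
      ring

lemma eulerianR_sum (r : ℕ) : ∀ n : ℕ,
    (∑ k ∈ Finset.range (n + 1), eulerianR r n k)
      = ∏ j ∈ Finset.range n, (1 + (j : ℤ) * (r : ℤ)) := by
  intro n
  induction n with
  | zero => simp [eulerianR]
  | succ n ih =>
    have step : ∀ k : ℕ, eulerianR r (n + 1) k =
        ((k : ℤ) + 1) * eulerianR r n k
          + ((r : ℤ) * ((n : ℤ) + 1) - ((r : ℤ) - 1) - (k : ℤ))
              * (if k = 0 then 0 else eulerianR r n (k - 1)) := fun k => rfl
    calc ∑ k ∈ Finset.range (n + 2), eulerianR r (n + 1) k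
        = (∑ k ∈ Finset.range (n + 2), ((k : ℤ) + 1) * eulerianR r n k)
          + ∑ k ∈ Finset.range (n + 2),
              ((r : ℤ) * ((n : ℤ) + 1) - ((r : ℤ) - 1) - (k : ℤ))
                * (if k = 0 then 0 else eulerianR r n (k - 1)) := by
          rw [← Finset.sum_add_distrib]
          exact Finset.sum_congr rfl fun k _ => step k
      _ = (∑ k ∈ Finset.range (n + 1), ((k : ℤ) + 1) * eulerianR r n k)
          + ∑ k ∈ Finset.range (n + 1),
              ((r : ℤ) * ((n : ℤ) + 1) - ((r : ℤ) - 1) - ((k : ℤ) + 1))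
                * eulerianR r n k := by
          congr 1
          · rw [Finset.sum_range_succ,
              eulerianR_eq_zero r n (n + 1) (by omega) (by omega)]
            ring
          · rw [Finset.sum_range_succ']
            simp only [if_neg (Nat.succ_ne_zero _), Nat.add_sub_cancel, if_pos rfl]
            push_cast
            ring
      _ = ∑ k ∈ Finset.range (n + 1), ((n : ℤ) * r + 1) * eulerianR r n k := by
          rw [← Finset.sum_add_distrib]
          exact Finset.sum_congr rfl fun k _ => by ring
      _ = ((n : ℤ) * r + 1) * ∑ k ∈ Finset.range (n + 1), eulerianR r n k := by
          rw [Finset.mul_sum]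
      _ = ∏ j ∈ Finset.range (n + 1), (1 + (j : ℤ) * (r : ℤ)) := by
          rw [ih, Finset.prod_range_succ]; ring

/-- The `r`-th order Eulerian numbers satisfy
(i) `⟨n,n-1⟩^{(r)} = F_n^{(r-1)}` (for `n ≥ 1`) and
(ii) `Σ_{k=0}^n ⟨n,k⟩^{(r)} = F_n^{(r)}`, where `F_n^{(s)} = ∏_{j=0}^{n-1} (1+js)`. -/
theorem stmt_13 (r : ℕ) (hr : 1 ≤ r) (n : ℕ) :
    (1 ≤ n → eulerianR r n (n - 1)
        = ∏ j ∈ Finset.range n, (1 + (j : ℤ) * ((r : ℤ) - 1)))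
    ∧ (∑ k ∈ Finset.range (n + 1), eulerianR r n k)
        = ∏ j ∈ Finset.range n, (1 + (j : ℤ) * (r : ℤ)) := by
  exact ⟨eulerianR_diag r n, eulerianR_sum r n⟩
end

section
/- For the lower-triangular Toeplitz matrix T_ξ with entries (T_ξ)_{ℓk} = ξ^{ℓ-k} for ℓ ≥ k and 0 otherwise (ξ an element of a commutative ring), every minor of T_ξ is either 0 or a power of ξ. Consequently, if ξ ≥ 0 in a partially ordered commutative ring, then T_ξ is totally positive (all minors are nonnegative). -/
/-- The minor of an infinite matrix `M : ℕ → ℕ → R` with rows `f 0 < f 1 < ⋯`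
and columns `g 0 < g 1 < ⋯` (for strictly monotone `f, g`). -/
noncomputable def submatrixDet {R : Type*} [CommRing R] (M : ℕ → ℕ → R) {k : ℕ}
    (f g : Fin k → ℕ) : R :=
  Matrix.det (Matrix.of fun i j => M (f i) (g j))

/-- The lower-triangular Toeplitz matrix of powers of `ξ`:
`(T_ξ)_{ℓk} = ξ^{ℓ-k}` for `ℓ ≥ k`, and `0` otherwise. -/
def toeplitzPow {R : Type*} [CommRing R] (ξ : R) : ℕ → ℕ → R :=
  fun ℓ k => if k ≤ ℓ then ξ ^ (ℓ - k) else 0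

/-- Leibniz + pigeonhole: a big zero block forces the determinant to vanish. -/
lemma det_zero_block {R : Type*} [CommRing R] {k : ℕ} (M : Matrix (Fin k) (Fin k) R)
    (S T : Finset (Fin k)) (h0 : ∀ i ∈ S, ∀ j ∈ T, M i j = 0)
    (hc : k < S.card + T.card) : M.det = 0 := by
  rw [Matrix.det_apply]
  apply Finset.sum_eq_zero
  intro σ _
  have hex : ∃ j ∈ T, σ j ∈ S := by
    by_contra hcon
    push_neg at hcon
    have hsub : T.image σ ⊆ Sᶜ := by
      intro x hx
      obtain ⟨j, hj, rfl⟩ := Finset.mem_image.mp hx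
      simpa using hcon j hj
    have h1 := Finset.card_le_card hsub
    rw [Finset.card_image_of_injective _ (Equiv.injective σ)] at h1
    have h2 : Sᶜ.card = Fintype.card (Fin k) - S.card := Finset.card_compl S
    simp only [Fintype.card_fin] at h2
    have h3 : S.card ≤ k := le_trans (Finset.card_le_card (Finset.subset_univ S))
      (by simp)
    omega
  obtain ⟨j, hjT, hjS⟩ := hex
  have hz : ∏ i : Fin k, M (σ i) i = 0 :=
    Finset.prod_eq_zero (Finset.mem_univ j) (h0 _ hjS _ hjT)
  rw [hz, smul_zero]

lemma key_minor {R : Type*} [CommRing R] (ξ : R) (k : ℕ) (f g : Fin k → ℕ)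
    (hf : StrictMono f) (hg : StrictMono g) :
    submatrixDet (toeplitzPow ξ) f g = 0
      ∨ ∃ p : ℕ, submatrixDet (toeplitzPow ξ) f g = ξ ^ p := by
  match k with
  | 0 =>
    right
    exact ⟨0, by simp [submatrixDet, Matrix.det_isEmpty]⟩
  | n + 1 =>
    set A : Matrix (Fin (n+1)) (Fin (n+1)) R :=
      Matrix.of fun i j => toeplitzPow ξ (f i) (g j) with hA
    have hAentry : ∀ i j, A i j = if g j ≤ f i then ξ ^ (f i - g j) else 0 := by
      intro i j; rfl
    -- the row-reduced matrix
    set B : Matrix (Fin (n+1)) (Fin (n+1)) R := fun i j =>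
      Fin.cases (A 0 j)
        (fun i' => if f (Fin.castSucc i') < g j ∧ g j ≤ f (Fin.succ i')
          then ξ ^ (f (Fin.succ i') - g j) else 0) i with hB
    have hB0 : ∀ j, B 0 j = A 0 j := fun j => rfl
    have hBsucc : ∀ (i' : Fin n) (j : Fin (n+1)), B (Fin.succ i') j =
        if f (Fin.castSucc i') < g j ∧ g j ≤ f (Fin.succ i')
          then ξ ^ (f (Fin.succ i') - g j) else 0 := by
      intro i' j
      simp [hB]
    have hdet : A.det = B.det := by
      apply Matrix.det_eq_of_forall_row_eq_smul_add_pred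
        (fun i' => ξ ^ (f (Fin.succ i') - f (Fin.castSucc i')))
      · intro j; exact (hB0 j).symm
      · intro i' j
        have hff : f (Fin.castSucc i') < f (Fin.succ i') :=
          hf Fin.castSucc_lt_succ
        rw [hBsucc, hAentry, hAentry]
        by_cases h1 : g j ≤ f (Fin.castSucc i')
        · have h2 : g j ≤ f (Fin.succ i') := le_trans h1 (le_of_lt hff)
          rw [if_pos h2, if_neg (by omega), if_pos h1, zero_add, ← pow_add]
          congr 1
          omega
        · by_cases h2 : g j ≤ f (Fin.succ i')
          · rw [if_pos h2, if_pos ⟨by omega, h2⟩, if_neg h1, mul_zero, add_zero]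
          · rw [if_neg h2, if_neg (by tauto), if_neg h1, mul_zero, add_zero]
    by_cases hcase1 : ∃ i : Fin (n+1), f i < g i
    · -- a zero block in A: rows ≤ i, columns ≥ i
      left
      obtain ⟨i, hi⟩ := hcase1
      show A.det = 0
      apply det_zero_block A (Finset.Iic i) (Finset.Ici i)
      · intro i' hi' j hj
        rw [Finset.mem_Iic] at hi'
        rw [Finset.mem_Ici] at hj
        have : f i' ≤ f i := hf.monotone hi'
        have : g i ≤ g j := hg.monotone hj
        rw [hAentry, if_neg (by omega)]
      · rw [Fin.card_Iic, Fin.card_Ici]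
        omega
    · push_neg at hcase1
      by_cases hcase2 : ∃ i j : Fin (n+1), i < j ∧ g j ≤ f i
      · -- a zero block in B: rows > i, columns ≤ j
        left
        obtain ⟨i, j, hij, hgf⟩ := hcase2
        show A.det = 0
        rw [hdet]
        apply det_zero_block B (Finset.Ioi i) (Finset.Iic j)
        · intro i' hi' j' hj'
          rw [Finset.mem_Ioi] at hi'
          rw [Finset.mem_Iic] at hj'
          -- i' > i ≥ 0, so i' = succ m with castSucc m ≥ i
          obtain ⟨m, rfl⟩ : ∃ m : Fin n, i' = Fin.succ m := by
            refine ⟨⟨i'.val - 1, by omega⟩, ?_⟩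
            have : (0:Fin (n+1)) ≤ i := Fin.zero_le i
            have hpos : 0 < i'.val := by
              have := Fin.lt_iff_val_lt_val.mp hi'
              omega
            apply Fin.ext
            simp [Fin.val_succ]
            omega
          have hmi : i ≤ Fin.castSucc m := by
            have := Fin.lt_iff_val_lt_val.mp hi'
            simp only [Fin.val_succ] at this
            rw [Fin.le_iff_val_le_val]
            simp only [Fin.coe_castSucc]
            omega
          have h1 : f i ≤ f (Fin.castSucc m) := hf.monotone hmi
          have h2 : g j' ≤ g j := hg.monotone hj'
          rw [hBsucc, if_neg (by omega)]
        · rw [Fin.card_Ioi, Fin.card_Iic]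
          have := Fin.lt_iff_val_lt_val.mp hij
          have := i.isLt
          have := j.isLt
          omega
      · -- the good case: B is diagonal
        push_neg at hcase2
        right
        refine ⟨∑ i : Fin (n+1), (f i - g i), ?_⟩
        show A.det = _
        have hBd : B = Matrix.diagonal (fun i => ξ ^ (f i - g i)) := by
          funext i j
          induction i using Fin.cases with
          | zero =>
            rw [hB0, hAentry]
            rcases eq_or_ne (0 : Fin (n+1)) j with rfl | hj
            · rw [Matrix.diagonal_apply_eq, if_pos (hcase1 0)]
            · have h0j : (0:Fin (n+1)) < j := (Fin.zero_le j).lt_of_ne hj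
              have := hcase2 0 j h0j
              rw [Matrix.diagonal_apply_ne _ hj, if_neg (by omega)]
          | succ i' =>
            rw [hBsucc]
            rcases eq_or_ne (Fin.succ i') j with rfl | hj
            · rw [Matrix.diagonal_apply_eq]
              have h1 : f (Fin.castSucc i') < g (Fin.succ i') :=
                hcase2 _ _ Fin.castSucc_lt_succ
              rw [if_pos ⟨h1, hcase1 _⟩]
            · rw [Matrix.diagonal_apply_ne _ hj]
              rcases lt_or_gt_of_ne hj with h | h
              · have h2 : f (Fin.succ i') < g j := hcase2 _ _ h
                rw [if_neg (by omega)]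
              · -- j < succ i', i.e. j ≤ castSucc i'
                have hle : j ≤ Fin.castSucc i' := by
                  rw [Fin.le_iff_val_le_val]
                  have := Fin.lt_iff_val_lt_val.mp h
                  simp only [Fin.val_succ] at this
                  simp only [Fin.coe_castSucc]
                  omega
                have h1 : g j ≤ f (Fin.castSucc i') :=
                  le_trans (hcase1 j) (hf.monotone hle)
                rw [if_neg (by omega)]
        rw [hdet, hBd, Matrix.det_diagonal, Finset.prod_pow_eq_pow_sum]

/-- Every minor of `T_ξ` is either `0` or a power of `ξ`; consequently, if `ξ ≥ 0`
in a partially ordered commutative ring, then `T_ξ` is totally positive. -/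
theorem stmt_14 {R : Type*} [CommRing R] [PartialOrder R] [IsOrderedRing R] (ξ : R) :
    (∀ (k : ℕ) (f g : Fin k → ℕ), StrictMono f → StrictMono g →
        submatrixDet (toeplitzPow ξ) f g = 0
          ∨ ∃ p : ℕ, submatrixDet (toeplitzPow ξ) f g = ξ ^ p)
    ∧ (0 ≤ ξ → ∀ (k : ℕ) (f g : Fin k → ℕ), StrictMono f → StrictMono g →
        0 ≤ submatrixDet (toeplitzPow ξ) f g) := by
  constructor
  · intro k f g hf hg
    exact key_minor ξ k f g hf hg
  · intro hξ k f g hf hg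
    rcases key_minor ξ k f g hf hg with h | ⟨p, h⟩
    · rw [h]
    · rw [h]; exact pow_nonneg hξ p
end

section
/- Let A be a matrix over a partially ordered commutative ring all of whose nonzero entries lie on two consecutive diagonals (i.e., A is bidiagonal). Then A is totally positive if and only if all its entries are nonnegative; indeed every nonzero minor of A is a product of entries of A. -/
private lemma band_key {R : Type*} [CommRing R] (A : ℕ → ℕ → R) (d : ℤ)
    (hband : ∀ i j : ℕ, A i j ≠ 0 → ((j : ℤ) - (i : ℤ) = d ∨ (j : ℤ) - (i : ℤ) = d + 1)) :
    ∀ (k : ℕ) (f g : Fin k → ℕ), StrictMono f → StrictMono g →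
      submatrixDet A f g = 0 ∨ submatrixDet A f g = ∏ i, A (f i) (g i) := by
  intro k
  induction k with
  | zero =>
    intro f g _ _
    right
    simp [submatrixDet, Matrix.det_fin_zero]
  | succ k ih =>
    intro f g hf hg
    by_cases hd : (g 0 : ℤ) - (f 0 : ℤ) = d
    · -- column 0 has only the top entry nonzero
      have hcol : ∀ i : Fin (k+1), i ≠ 0 → A (f i) (g 0) = 0 := by
        intro i hi
        by_contra h
        have hfi : f 0 < f i := hf (Fin.pos_of_ne_zero hi)
        rcases hband (f i) (g 0) h with h' | h' <;> omega
      have expand := Matrix.det_succ_column_zero (Matrix.of fun i j => A (f i) (g j))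
      rw [submatrixDet, expand, Finset.sum_eq_single 0]
      · have hrest : ((Matrix.of fun i j => A (f i) (g j)).submatrix
            Fin.succ Fin.succ).det
            = submatrixDet A (f ∘ Fin.succ) (g ∘ Fin.succ) := rfl
        rcases ih (f ∘ Fin.succ) (g ∘ Fin.succ)
            (hf.comp (Fin.strictMono_succ)) (hg.comp (Fin.strictMono_succ)) with h0 | hp
        · left; simp only [Fin.succAbove_zero, hrest, h0, mul_zero]
        · right
          simp only [Fin.succAbove_zero, Matrix.of_apply, Fin.val_zero, pow_zero, one_mul]
          rw [hrest, hp, Fin.prod_univ_succ]; rfl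
      · intro i _ hi
        simp [hcol i hi]
      · simp
    · by_cases hd1 : (g 0 : ℤ) - (f 0 : ℤ) = d + 1
      · -- row 0 has only the first entry nonzero
        have hrow : ∀ j : Fin (k+1), j ≠ 0 → A (f 0) (g j) = 0 := by
          intro j hj
          by_contra h
          have hgj : g 0 < g j := hg (Fin.pos_of_ne_zero hj)
          rcases hband (f 0) (g j) h with h' | h' <;> omega
        have expand := Matrix.det_succ_row_zero (Matrix.of fun i j => A (f i) (g j))
        rw [submatrixDet, expand, Finset.sum_eq_single 0]
        · have hrest : ((Matrix.of fun i j => A (f i) (g j)).submatrix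
              Fin.succ Fin.succ).det
              = submatrixDet A (f ∘ Fin.succ) (g ∘ Fin.succ) := rfl
          rcases ih (f ∘ Fin.succ) (g ∘ Fin.succ)
              (hf.comp (Fin.strictMono_succ)) (hg.comp (Fin.strictMono_succ)) with h0 | hp
          · left; simp only [Fin.succAbove_zero, hrest, h0, mul_zero]
          · right
            simp only [Fin.succAbove_zero, Matrix.of_apply, Fin.val_zero, pow_zero, one_mul]
            rw [hrest, hp, Fin.prod_univ_succ]; rfl
        · intro j _ hj
          simp [hrow j hj]
        · simp
      · -- either the first row or the first column of the minor is zero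
        have hcases : (g 0 : ℤ) - (f 0 : ℤ) < d ∨ d + 1 < (g 0 : ℤ) - (f 0 : ℤ) := by omega
        left
        rcases hcases with hlt | hgt
        · apply Matrix.det_eq_zero_of_column_eq_zero 0
          intro i
          by_contra h
          have hfi : f 0 ≤ f i := hf.monotone (Fin.zero_le i)
          rcases hband (f i) (g 0) h with h' | h' <;> omega
        · apply Matrix.det_eq_zero_of_row_eq_zero 0
          intro j
          by_contra h
          have hgj : g 0 ≤ g j := hg.monotone (Fin.zero_le j)
          rcases hband (f 0) (g j) h with h' | h' <;> omega

/-- If all nonzero entries of `A` lie on two consecutive diagonals, then `A` is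
totally positive iff all its entries are nonnegative; indeed, every nonzero minor
of `A` is a product of entries of `A`. -/
theorem stmt_15 {R : Type*} [CommRing R] [PartialOrder R] [IsOrderedRing R] (A : ℕ → ℕ → R)
    (hband : ∃ d : ℤ, ∀ i j : ℕ, A i j ≠ 0 → ((j : ℤ) - (i : ℤ) = d ∨ (j : ℤ) - (i : ℤ) = d + 1)) :
    ((∀ (k : ℕ) (f g : Fin k → ℕ), StrictMono f → StrictMono g →
        0 ≤ submatrixDet A f g)
      ↔ ∀ i j : ℕ, 0 ≤ A i j)
    ∧ ∀ (k : ℕ) (f g : Fin k → ℕ), StrictMono f → StrictMono g →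
        submatrixDet A f g = 0 ∨
          ∃ l : List (ℕ × ℕ), submatrixDet A f g = (l.map fun p => A p.1 p.2).prod := by
  obtain ⟨d, hband⟩ := hband
  constructor
  · constructor
    · intro htp i j
      have h := htp 1 (fun _ => i) (fun _ => j)
        (fun a b hab => absurd (Subsingleton.elim a b ▸ hab) (lt_irrefl b))
        (fun a b hab => absurd (Subsingleton.elim a b ▸ hab) (lt_irrefl b))
      simpa [submatrixDet, Matrix.det_fin_one] using h
    · intro hpos k f g hf hg
      rcases band_key A d hband k f g hf hg with h0 | hp
      · exact le_of_eq h0.symm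
      · rw [hp]
        exact Finset.prod_nonneg fun i _ => hpos _ _
  · intro k f g hf hg
    rcases band_key A d hband k f g hf hg with h0 | hp
    · exact Or.inl h0
    · right
      refine ⟨List.ofFn (fun i => (f i, g i)), ?_⟩
      rw [hp, List.map_ofFn, List.prod_ofFn]
      rfl
end

section
/- Product of bidiagonal matrices with constant diagonals: for indeterminates x_0, x_1, ..., x_m and y, the product L(x_1)·L(x_2)⋯L(x_m)·U⋆(y, x_0) has (i,j) entry equal to e_{i-j+1}(x_0, x_1, ..., x_m) when j ≥ 1, and y·e_i(x_1,...,x_m) when j = 0. Here L(s) is the lower-bidiagonal matrix with 1 on the diagonal and constant s on the subdiagonal; U⋆(y, x_0) is the upper-bidiagonal matrix with 1 on the superdiagonal and diagonal (y, x_0, x_0, x_0, ...); and e_k denotes the elementary symmetric polynomial (e_k := 0 for k < 0). -/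
/-- Product of infinite matrices (well-defined on banded matrices via `finsum`). -/
noncomputable def matMul {R : Type*} [CommRing R] (A B : ℕ → ℕ → R) : ℕ → ℕ → R :=
  fun i j => ∑ᶠ k : ℕ, A i k * B k j

/-- The lower-bidiagonal matrix `L(s)` with `1` on the diagonal and constant `s`
on the subdiagonal. -/
def Lmat {R : Type*} [CommRing R] (s : R) : ℕ → ℕ → R :=
  fun i j => if i = j then 1 else if i = j + 1 then s else 0

/-- The upper-bidiagonal matrix `U⋆(y, x₀)` with `1` on the superdiagonal and
diagonal `(y, x₀, x₀, x₀, …)`. -/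
def Ustar {R : Type*} [CommRing R] (y x0 : R) : ℕ → ℕ → R :=
  fun i j => if j = i + 1 then 1 else if i = j then (if i = 0 then y else x0) else 0

/-- The elementary symmetric polynomial `e_k` of the entries of a list. -/
def esymmList {R : Type*} [CommRing R] (l : List R) (k : ℕ) : R :=
  ((List.sublistsLen k l).map List.prod).sum

section Aux
variable {R : Type*} [CommRing R]

lemma esymmList_zero (l : List R) : esymmList l 0 = 1 := by simp [esymmList]

lemma esymmList_cons (a : R) (l : List R) (k : ℕ) :
    esymmList (a :: l) (k + 1) = esymmList l (k + 1) + a * esymmList l k := by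
  simp [esymmList, List.sublistsLen_succ_cons, List.map_map, Function.comp_def,
    List.sum_map_mul_left]

lemma esymmList_nil_succ (k : ℕ) : esymmList ([] : List R) (k + 1) = 0 := by
  simp [esymmList]

lemma matMul_Lmat (s : R) (A : ℕ → ℕ → R) (i j : ℕ) :
    matMul (Lmat s) A i j = A i j + (if i = 0 then 0 else s * A (i - 1) j) := by
  rcases i with _ | n
  · simp only [matMul, if_pos rfl, add_zero]
    rw [finsum_eq_single _ 0]
    · simp [Lmat]
    · intro k hk; simp [Lmat, Ne.symm hk, (by omega : 0 ≠ k + 1)]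
  · simp only [matMul, Nat.succ_ne_zero, if_neg, Nat.add_sub_cancel]
    rw [finsum_eq_finset_sum_of_support_subset _ (s := {n, n+1})]
    · rw [Finset.sum_pair (by omega)]
      simp [Lmat, (by omega : n + 1 ≠ n)]
      ring
    · intro k hk
      simp only [Function.mem_support, Lmat] at hk
      simp only [Finset.coe_insert, Finset.coe_singleton, Set.mem_insert_iff, Set.mem_singleton_iff]
      by_contra h
      push_neg at h
      rw [if_neg (by omega), if_neg (by omega)] at hk
      exact hk (zero_mul _)

lemma esymmList_swap (a b : R) (l : List R) (k : ℕ) :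
    esymmList (a :: b :: l) k = esymmList (b :: a :: l) k := by
  match k with
  | 0 => rw [esymmList_zero, esymmList_zero]
  | 1 => simp only [esymmList_cons, esymmList_zero]; ring
  | (n+2) => rw [esymmList_cons, esymmList_cons, esymmList_cons, esymmList_cons,
      esymmList_cons, esymmList_cons]; ring

lemma esymmList_singleton (a : R) (n : ℕ) :
    esymmList [a] n = if n = 0 then 1 else if n = 1 then a else 0 := by
  match n with
  | 0 => simp [esymmList_zero]
  | 1 => simp [esymmList_cons, esymmList_zero, esymmList_nil_succ]
  | (n+2) => simp [esymmList_cons, esymmList_nil_succ]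

lemma aux (m : ℕ) (f : ℕ → R) (y x0 : R) : ∀ i j : ℕ,
    (List.foldr matMul (Ustar y x0) ((List.range m).map fun t => Lmat (f t))) i j
      = if j = 0 then y * esymmList (List.ofFn fun t : Fin m => f t) i
        else if j ≤ i + 1 then esymmList (x0 :: List.ofFn fun t : Fin m => f t) (i + 1 - j)
        else 0 := by
  induction m generalizing f with
  | zero =>
    intro i j
    simp only [List.range_zero, List.map_nil, List.foldr_nil, List.ofFn_zero]
    rcases j with _ | j
    · rcases i with _ | i
      · simp [Ustar, esymmList_zero]
      · simp [Ustar, esymmList_nil_succ]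
    · rw [if_neg (Nat.succ_ne_zero j), esymmList_singleton]
      unfold Ustar
      split_ifs <;> first | rfl | omega
  | succ m ih =>
    intro i j
    rw [List.range_succ_eq_map, List.map_cons, List.foldr_cons, List.map_map]
    have hcomp : ((fun t => Lmat (f t)) ∘ Nat.succ) = fun t => Lmat (f (t + 1)) := rfl
    rw [hcomp, matMul_Lmat]
    rw [ih (fun t => f (t + 1)) i j]
    simp only [List.ofFn_succ, Fin.val_succ, Fin.val_zero]
    rcases i with _ | n
    · rw [if_pos rfl, add_zero]
      split_ifs with h1 h2
      · rw [esymmList_zero, esymmList_zero]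
      · rw [(by omega : 0 + 1 - j = 0), esymmList_zero, esymmList_zero]
      · rfl
    · rw [if_neg (Nat.succ_ne_zero n), Nat.add_sub_cancel,
        ih (fun t => f (t + 1)) n j]
      split_ifs with h1 h2 h3 h3
      · rw [esymmList_cons]; ring
      · rw [esymmList_swap, (by omega : n + 1 + 1 - j = (n + 1 - j) + 1),
          esymmList_cons, esymmList_cons, esymmList_cons]
      · rw [(by omega : n + 1 + 1 - j = 0), esymmList_zero, esymmList_zero]; ring
      · omega
      · ring

end Aux

/-- The product `L(x₁)⋯L(x_m)·U⋆(y, x₀)` has `(i,j)` entry `e_{i-j+1}(x₀,…,x_m)`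
for `j ≥ 1` (zero when `i-j+1 < 0`), and `y·e_i(x₁,…,x_m)` for `j = 0`; here the
`x_t` and `y` are indeterminates. -/
theorem stmt_18 (m : ℕ) (i j : ℕ) :
    (List.foldr matMul
        (Ustar (MvPolynomial.X (m + 1) : MvPolynomial ℕ ℚ) (MvPolynomial.X 0))
        ((List.range m).map fun t => Lmat (MvPolynomial.X (t + 1)))) i j
      = if j = 0 then
          MvPolynomial.X (m + 1)
            * esymmList (List.ofFn fun t : Fin m =>
                (MvPolynomial.X ((t : ℕ) + 1) : MvPolynomial ℕ ℚ)) i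
        else if j ≤ i + 1 then
          esymmList (List.ofFn fun t : Fin (m + 1) =>
            (MvPolynomial.X (t : ℕ) : MvPolynomial ℕ ℚ)) (i + 1 - j)
        else 0 := by
  rw [aux m (fun t => (MvPolynomial.X (t + 1) : MvPolynomial ℕ ℚ))
      (MvPolynomial.X (m + 1)) (MvPolynomial.X 0) i j]
  simp only [List.ofFn_succ, Fin.val_succ, Fin.val_zero]
end
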